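/- arXiv:1506.00369 — 4 statements merged into one kernel-verified Lean document; each statement's English description precedes it below -/
import Mathlib

section
/- Let T be a non-singular measurable transformation with Radon–Nikodym derivative f₀, let Φ₁, Φ₂ ∈ Δ' be Young functions such that Φ₂∘Φ₁⁻¹ is a Young function, and let X = (⋃ₙ Aₙ) ∪ B be the atomic decomposition. If (i) f₀ = 0 μ-a.e. on B and (ii) sup_n Φ₂(1/Φ₁⁻¹(μ(Aₙ)))·f₀(Aₙ)·μ(Aₙ) < ∞, then C_T f = f∘T defines a bounded composition operator from L^{Φ₁}(Σ) into L^{Φ₂}(Σ). -/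
open MeasureTheory Filter Topology

/-- A Young function: continuous, convex, even, vanishing exactly at 0,
with superlinear growth at infinity. -/
structure YoungFunction where
  toFun : ℝ → ℝ
  continuous' : Continuous toFun
  convexOn' : ConvexOn ℝ Set.univ toFun
  even' : ∀ x, toFun (-x) = toFun x
  zero_iff' : ∀ x, toFun x = 0 ↔ x = 0
  tendsto_atTop' : Tendsto (fun x => toFun x / x) atTop atTop

instance : CoeFun YoungFunction fun _ => ℝ → ℝ := ⟨YoungFunction.toFun⟩

variable {X : Type*} [MeasurableSpace X]

/-- Membership in the Orlicz space `L^Φ(μ)`. -/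
def MemOrlicz (Φ : YoungFunction) (μ : Measure X) (f : X → ℝ) : Prop :=
  AEStronglyMeasurable f μ ∧ ∃ k > 0, Integrable (fun x => Φ (k * f x)) μ

/-- The Luxemburg norm on the Orlicz space `L^Φ(μ)`. -/
noncomputable def luxNorm (Φ : YoungFunction) (μ : Measure X) (f : X → ℝ) : ℝ :=
  sInf {k : ℝ | 0 < k ∧ ∫ x, Φ (f x / k) ∂μ ≤ 1}

/-- The generalized (right) inverse of a Young function on `[0,∞)`. -/
noncomputable def yInv (Φ : YoungFunction) (y : ℝ) : ℝ :=
  sSup {x : ℝ | 0 ≤ x ∧ Φ x ≤ y}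

/-- `Φ` satisfies the `Δ₂` condition globally. -/
def YoungDeltaTwo (Φ : YoungFunction) : Prop :=
  ∃ k > 0, ∀ x : ℝ, 0 ≤ x → Φ (2 * x) ≤ k * Φ x

/-- `Φ` satisfies the `Δ'` condition globally, with constant `c`. -/
def YoungDeltaPrime (Φ : YoungFunction) (c : ℝ) : Prop :=
  0 < c ∧ ∀ x y : ℝ, 0 ≤ x → 0 ≤ y → Φ (x * y) ≤ c * Φ x * Φ y

/-- `Φ` satisfies the `∇'` condition globally, with constant `b`. -/
def YoungNablaPrime (Φ : YoungFunction) (b : ℝ) : Prop :=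
  0 < b ∧ ∀ x y : ℝ, 0 ≤ x → 0 ≤ y → Φ x * Φ y ≤ Φ (b * x * y)

/-- `Φ ≺ Ψ` : `Φ` is weaker than `Ψ`. -/
def YoungWeaker (Φ Ψ : YoungFunction) : Prop :=
  ∃ a > 0, ∃ x₀ : ℝ, 0 ≤ x₀ ∧ ∀ x : ℝ, x₀ ≤ x → Φ x ≤ Ψ (a * x)

/-- `A` is an atom of the measure `μ`. -/
def IsAtomSet (μ : Measure X) (A : Set X) : Prop :=
  MeasurableSet A ∧ 0 < μ A ∧
    ∀ B : Set X, MeasurableSet B → B ⊆ A → μ B = 0 ∨ μ B = μ A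

/-- `μ` is non-atomic on the set `S`. -/
def NonAtomicOn (μ : Measure X) (S : Set X) : Prop :=
  ∀ A : Set X, A ⊆ S → ¬ IsAtomSet μ A

/-- A linear map between Orlicz spaces (given as a map on functions) is bounded. -/
def OrliczBounded (Φ₁ Φ₂ : YoungFunction) (μ : Measure X)
    (Tmap : (X → ℝ) → (X → ℝ)) : Prop :=
  ∃ C > 0, ∀ f : X → ℝ, MemOrlicz Φ₁ μ f →
    MemOrlicz Φ₂ μ (Tmap f) ∧ luxNorm Φ₂ μ (Tmap f) ≤ C * luxNorm Φ₁ μ f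

/-- The atomic decomposition of a σ-finite measure space: `X = (⋃ n, A n) ∪ B`
with the `A n` pairwise disjoint atoms of finite measure and `B` non-atomic. -/
def AtomicDecomposition (μ : Measure X) (A : ℕ → Set X) (B : Set X) : Prop :=
  (∀ n, IsAtomSet μ (A n)) ∧ (∀ n, μ (A n) < ⊤) ∧
    Pairwise (Function.onFun Disjoint A) ∧ (∀ n, Disjoint (A n) B) ∧
    MeasurableSet B ∧ NonAtomicOn μ B ∧ (⋃ n, A n) ∪ B = Set.univ

namespace YoungFunction
variable (Φ : YoungFunction)

lemma zero : Φ 0 = 0 := (Φ.zero_iff' 0).mpr rfl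

lemma scale {t : ℝ} (ht0 : 0 ≤ t) (ht1 : t ≤ 1) (s : ℝ) : Φ (t * s) ≤ t * Φ s := by
  have h := Φ.convexOn'.2 (Set.mem_univ s) (Set.mem_univ (0:ℝ)) ht0
    (sub_nonneg.mpr ht1) (by ring : t + (1 - t) = 1)
  simpa [Φ.zero, smul_eq_mul] using h

lemma nonneg (x : ℝ) : 0 ≤ Φ x := by
  have h := Φ.convexOn'.2 (Set.mem_univ x) (Set.mem_univ (-x)) (by norm_num : (0:ℝ) ≤ 1/2)
    (by norm_num : (0:ℝ) ≤ 1/2) (by norm_num)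
  have : Φ ((1/2 : ℝ) • x + (1/2 : ℝ) • (-x)) = 0 := by
    simp [Φ.zero]
  rw [this] at h
  rw [Φ.even'] at h
  simp only [smul_eq_mul] at h
  linarith

lemma mono {x y : ℝ} (hx : 0 ≤ x) (hxy : x ≤ y) : Φ x ≤ Φ y := by
  rcases eq_or_lt_of_le (hx.trans hxy) with h | hy
  · obtain rfl : y = 0 := h.symm
    obtain rfl : x = 0 := le_antisymm hxy hx
    exact le_rfl
  · have h := Φ.scale (t := x / y) (div_nonneg hx hy.le) (div_le_one_of_le₀ hxy hy.le) y
    rw [div_mul_cancel₀ _ (ne_of_gt hy)] at h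
    calc Φ x ≤ x / y * Φ y := h
      _ ≤ 1 * Φ y := by
          apply mul_le_mul_of_nonneg_right (div_le_one_of_le₀ hxy hy.le) (Φ.nonneg y)
      _ = Φ y := one_mul _

lemma pos {x : ℝ} (hx : x ≠ 0) : 0 < Φ x :=
  lt_of_le_of_ne (Φ.nonneg x) fun h => hx ((Φ.zero_iff' x).mp h.symm)

lemma abs_eq (y : ℝ) : Φ |y| = Φ y := by
  rcases abs_cases y with ⟨h, _⟩ | ⟨h, _⟩
  · rw [h]
  · rw [h]; exact Φ.even' y

lemma strictMono {x y : ℝ} (hx : 0 ≤ x) (hxy : x < y) : Φ x < Φ y := by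
  have hy : 0 < y := lt_of_le_of_lt hx hxy
  have h := Φ.scale (t := x / y) (div_nonneg hx hy.le) (div_le_one_of_le₀ hxy.le hy.le) y
  rw [div_mul_cancel₀ _ (ne_of_gt hy)] at h
  calc Φ x ≤ x / y * Φ y := h
    _ < 1 * Φ y := by
        exact mul_lt_mul_of_pos_right (by rw [div_lt_one hy]; exact hxy) (Φ.pos hy.ne')
    _ = Φ y := one_mul _

lemma tendsto_top : Tendsto (fun x => Φ x) atTop atTop := by
  apply tendsto_atTop_mono' atTop (f₁ := fun x => Φ x / x)
  · filter_upwards [eventually_ge_atTop (1:ℝ)] with x hx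
    rw [div_le_iff₀ (by linarith : (0:ℝ) < x)]
    nlinarith [Φ.nonneg x]
  · exact Φ.tendsto_atTop'

lemma surjOn {y : ℝ} (hy : 0 ≤ y) : ∃ x, 0 ≤ x ∧ Φ x = y := by
  obtain ⟨a, ha⟩ := eventually_atTop.mp (Φ.tendsto_top.eventually_ge_atTop y)
  set R := max a 1 with hRdef
  have hR0 : (0:ℝ) ≤ R := le_trans zero_le_one (le_max_right _ _)
  have hRy : y ≤ Φ R := ha R (le_max_left _ _)
  have hcont : ContinuousOn (fun x => Φ x) (Set.Icc 0 R) := Φ.continuous'.continuousOn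
  have hiv := intermediate_value_Icc hR0 hcont
  have hmem : y ∈ Set.Icc (Φ 0) (Φ R) := ⟨by rw [Φ.zero]; exact hy, hRy⟩
  obtain ⟨x, hx, hfx⟩ := hiv hmem
  exact ⟨x, hx.1, hfx⟩

end YoungFunction

namespace YoungFunction

lemma yInv_phi (Φ : YoungFunction) {u : ℝ} (hu : 0 ≤ u) : yInv Φ (Φ u) = u := by
  have hset : {x : ℝ | 0 ≤ x ∧ Φ x ≤ Φ u} = Set.Icc 0 u := by
    ext x
    constructor
    · rintro ⟨hx0, hxu⟩
      refine ⟨hx0, ?_⟩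
      by_contra h
      push_neg at h
      exact absurd hxu (not_le.mpr (Φ.strictMono hu h))
    · rintro ⟨hx0, hxu⟩
      exact ⟨hx0, Φ.mono hx0 hxu⟩
  rw [yInv, hset, csSup_Icc hu]

lemma exists_yInv (Φ : YoungFunction) {y : ℝ} (hy : 0 ≤ y) :
    0 ≤ yInv Φ y ∧ Φ (yInv Φ y) = y := by
  obtain ⟨u, hu0, hu⟩ := Φ.surjOn hy
  rw [← hu, Φ.yInv_phi hu0]
  exact ⟨hu0, rfl⟩

end YoungFunction

lemma ae_const_on_atom {X : Type*} [MeasurableSpace X] {μ : Measure X} {A : Set X}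
    (hAm : MeasurableSet A) (hpos : 0 < μ A)
    (hatom : ∀ B : Set X, MeasurableSet B → B ⊆ A → μ B = 0 ∨ μ B = μ A)
    (hfin : μ A ≠ ⊤) (f : X → ℝ) (hf : Measurable f) :
    ∃ a : ℝ, ∀ᵐ x ∂μ.restrict A, f x = a := by
  set ν := μ.restrict A with hν
  have hνuniv : ν Set.univ = μ A := by rw [hν, Measure.restrict_apply_univ]
  have hdich : ∀ S : Set X, MeasurableSet S → ν S = 0 ∨ ν S = μ A := by
    intro S hS
    rw [hν, Measure.restrict_apply hS]
    exact hatom (S ∩ A) (hS.inter hAm) Set.inter_subset_right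
  have hfinν : ∀ s : Set X, ν s ≠ ⊤ := fun s =>
    ne_top_of_le_ne_top (hνuniv.symm ▸ hfin) (measure_mono (Set.subset_univ _))
  set E : ℝ → Set X := fun t => {x | f x ≤ t} with hE
  have hEm : ∀ t, MeasurableSet (E t) := fun t => hf measurableSet_Iic
  have hEmono : ∀ {s t : ℝ}, s ≤ t → E s ⊆ E t := fun hst x hx => le_trans hx hst
  -- upper: some E n has full measure
  have claim1 : ∃ n : ℕ, ν (E n) = μ A := by
    by_contra h
    push_neg at h
    have h0 : ∀ n : ℕ, ν (E n) = 0 := fun n => (hdich _ (hEm n)).resolve_right (h n)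
    have hcover : Set.univ ⊆ ⋃ n : ℕ, E n := by
      intro x _
      obtain ⟨n, hn⟩ := exists_nat_ge (f x)
      exact Set.mem_iUnion.mpr ⟨n, hn⟩
    have hle : ν Set.univ ≤ ∑' n : ℕ, ν (E n) :=
      (measure_mono hcover).trans (measure_iUnion_le _)
    simp only [h0, tsum_zero, hνuniv, nonpos_iff_eq_zero] at hle
    exact (ne_of_gt hpos) hle
  -- lower: some E (-n) is null
  have claim2 : ∃ n : ℕ, ν (E (-(n:ℝ))) = 0 := by
    by_contra h
    push_neg at h
    have hfull : ∀ n : ℕ, ν (E (-(n:ℝ))) = μ A :=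
      fun n => (hdich _ (hEm _)).resolve_left (h n)
    have hcover : E 0 ⊆ ⋃ n : ℕ, (E 0 \ E (-(n:ℝ))) := by
      intro x hx
      obtain ⟨n, hn⟩ := exists_nat_gt (-f x)
      exact Set.mem_iUnion.mpr ⟨n, hx, by simp only [E, Set.mem_setOf_eq]; push_neg; linarith⟩
    have hz : ∀ n : ℕ, ν (E 0 \ E (-(n:ℝ))) = 0 := by
      intro n
      have hle : ν (E 0 \ E (-(n:ℝ))) ≤ ν (E (-(n:ℝ)))ᶜ :=
        measure_mono fun x hx => hx.2
      have : ν (E (-(n:ℝ)))ᶜ = 0 := by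
        rw [measure_compl (hEm _) (hfinν _), hνuniv, hfull n, tsub_self]
      exact le_antisymm (this ▸ hle) (zero_le)
    have hE0 : ν (E 0) = 0 := by
      refine le_antisymm ?_ (zero_le)
      calc ν (E 0) ≤ ν (⋃ n : ℕ, (E 0 \ E (-(n:ℝ)))) := measure_mono hcover
        _ ≤ ∑' n : ℕ, ν (E 0 \ E (-(n:ℝ))) := measure_iUnion_le _
        _ = 0 := by simp [hz]
    have h0 : ν (E 0) = μ A := by simpa using hfull 0
    rw [hE0] at h0
    exact absurd h0.symm (ne_of_gt hpos)
  -- define a as the infimum of full-measure levels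
  set S : Set ℝ := {t | ν (E t) = μ A} with hS
  obtain ⟨n₁, hn₁⟩ := claim1
  obtain ⟨n₀, hn₀⟩ := claim2
  have hSne : S.Nonempty := ⟨n₁, hn₁⟩
  have hSbdd : BddBelow S := by
    refine ⟨-(n₀:ℝ), fun t ht => ?_⟩
    by_contra hlt
    push_neg at hlt
    have : ν (E t) ≤ ν (E (-(n₀:ℝ))) := measure_mono (hEmono hlt.le)
    rw [hn₀, ht] at this
    exact (ne_of_gt hpos) (le_antisymm this (zero_le))
  set a := sInf S with ha
  refine ⟨a, ?_⟩
  have hlow : ν {x | f x < a} = 0 := by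
    have hcover : {x | f x < a} ⊆ ⋃ n : ℕ, E (a - 1/((n:ℝ)+1)) := by
      intro x hx
      simp only [Set.mem_setOf_eq] at hx
      obtain ⟨n, hn⟩ := exists_nat_one_div_lt (show (0:ℝ) < a - f x by linarith)
      refine Set.mem_iUnion.mpr ⟨n, ?_⟩
      simp only [E, Set.mem_setOf_eq]
      linarith
    have hz : ∀ n : ℕ, ν (E (a - 1/((n:ℝ)+1))) = 0 := by
      intro n
      rcases hdich _ (hEm (a - 1/((n:ℝ)+1))) with h | h
      · exact h
      · exfalso
        have hmem : (a - 1/((n:ℝ)+1)) ∈ S := h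
        have := csInf_le hSbdd hmem
        have hpos' : 0 < 1/((n:ℝ)+1) := by positivity
        rw [← ha] at this
        linarith
    refine le_antisymm ?_ (zero_le)
    calc ν {x | f x < a} ≤ ν (⋃ n : ℕ, E (a - 1/((n:ℝ)+1))) := measure_mono hcover
      _ ≤ ∑' n : ℕ, ν (E (a - 1/((n:ℝ)+1))) := measure_iUnion_le _
      _ = 0 := by simp only [hz, tsum_zero]
  have hhigh : ν {x | a < f x} = 0 := by
    have hfullt : ∀ t : ℝ, a < t → ν (E t) = μ A := by
      intro t hat
      obtain ⟨s, hsS, hst⟩ := exists_lt_of_csInf_lt hSne (ha ▸ hat)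
      refine le_antisymm (by rw [← hνuniv]; exact measure_mono (Set.subset_univ _)) ?_
      rw [← hsS]
      exact measure_mono (hEmono hst.le)
    have hcover : {x | a < f x} ⊆ ⋃ n : ℕ, (E (a + 1/((n:ℝ)+1)))ᶜ := by
      intro x hx
      simp only [Set.mem_setOf_eq] at hx
      obtain ⟨n, hn⟩ := exists_nat_one_div_lt (show (0:ℝ) < f x - a by linarith)
      refine Set.mem_iUnion.mpr ⟨n, ?_⟩
      simp only [E, Set.mem_compl_iff, Set.mem_setOf_eq]
      push_neg
      linarith
    have hz : ∀ n : ℕ, ν (E (a + 1/((n:ℝ)+1)))ᶜ = 0 := by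
      intro n
      have h1 : ν (E (a + 1/((n:ℝ)+1))) = μ A := by
        refine hfullt _ ?_
        have h2 : (0:ℝ) < 1/((n:ℝ)+1) := by positivity
        linarith
      rw [measure_compl (hEm _) (hfinν _), hνuniv, h1, tsub_self]
    refine le_antisymm ?_ (zero_le)
    calc ν {x | a < f x} ≤ ν (⋃ n : ℕ, (E (a + 1/((n:ℝ)+1)))ᶜ) := measure_mono hcover
      _ ≤ ∑' n : ℕ, ν (E (a + 1/((n:ℝ)+1)))ᶜ := measure_iUnion_le _
      _ = 0 := by simp only [hz, tsum_zero]
  have : ν {x | f x ≠ a} = 0 := by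
    have hsub : {x | f x ≠ a} ⊆ {x | f x < a} ∪ {x | a < f x} := by
      intro x hx
      rcases lt_or_gt_of_ne hx with h | h
      · exact Or.inl h
      · exact Or.inr h
    refine le_antisymm ?_ (zero_le)
    calc ν {x | f x ≠ a} ≤ ν ({x | f x < a} ∪ {x | a < f x}) := measure_mono hsub
      _ ≤ ν {x | f x < a} + ν {x | a < f x} := measure_union_le _ _
      _ = 0 := by rw [hlow, hhigh, add_zero]
  exact ae_iff.mpr this

lemma ae_val_nonneg {X : Type*} [MeasurableSpace X] {μ : Measure X} {A : Set X}
    (hpos : μ A ≠ 0) {h : X → ℝ} (hh : ∀ x, 0 ≤ h x) {c : ℝ}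
    (hc : ∀ᵐ x ∂μ.restrict A, h x = c) : 0 ≤ c := by
  by_contra hneg
  push_neg at hneg
  have hFalse : ∀ᵐ x ∂μ.restrict A, False := by
    filter_upwards [hc] with x hx
    have := hh x
    linarith
  rw [ae_iff] at hFalse
  simp only [not_false_iff, Set.setOf_true] at hFalse
  rw [Measure.restrict_apply_univ] at hFalse
  exact hpos hFalse

lemma core_lemma {X : Type*} [MeasurableSpace X] (μ : Measure X) (A : ℕ → Set X) (B : Set X)
    (hAm : ∀ n, MeasurableSet (A n)) (hApos : ∀ n, 0 < μ (A n)) (hAfin : ∀ n, μ (A n) ≠ ⊤)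
    (hatom : ∀ n, ∀ S : Set X, MeasurableSet S → S ⊆ A n → μ S = 0 ∨ μ S = μ (A n))
    (hdisj : Pairwise (Function.onFun Disjoint A)) (hBm : MeasurableSet B)
    (hAB : ∀ n, Disjoint (A n) B)
    (hcover : (⋃ n, A n) ∪ B = Set.univ)
    (Φ₁ Φ₂ Ψ : YoungFunction) (c₁ c₂ : ℝ) (hc₁ : 0 < c₁) (hc₂ : 0 < c₂)
    (hD₁ : ∀ x y : ℝ, 0 ≤ x → 0 ≤ y → Φ₁ (x*y) ≤ c₁ * Φ₁ x * Φ₁ y)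
    (hD₂ : ∀ x y : ℝ, 0 ≤ x → 0 ≤ y → Φ₂ (x*y) ≤ c₂ * Φ₂ x * Φ₂ y)
    (hΨ : ∀ x : ℝ, 0 ≤ x → Ψ x = Φ₂ (yInv Φ₁ x))
    (T : X → X) (hT : Measurable T)
    (f₀ : X → ℝ) (hf₀m : Measurable f₀) (hf₀nn : ∀ x, 0 ≤ f₀ x)
    (hf₀ : ∀ S : Set X, MeasurableSet S → μ.map T S = ∫⁻ x in S, ENNReal.ofReal (f₀ x) ∂μ)
    (c₀ : ℕ → ℝ) (hc₀ : ∀ n, ∀ᵐ x ∂μ.restrict (A n), f₀ x = c₀ n) (hc₀nn : ∀ n, 0 ≤ c₀ n)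
    (hB0 : ∀ᵐ x ∂μ.restrict B, f₀ x = 0)
    (M K₀ : ℝ) (hM : ∀ n, Φ₂ (1 / yInv Φ₁ (μ (A n)).toReal) * c₀ n * (μ (A n)).toReal ≤ M)
    (hK₀1 : 1 ≤ K₀) (hDK₀ : c₂ * Ψ c₁ * M ≤ K₀)
    (g : X → ℝ) (hg : Measurable g)
    (hg1 : ∫⁻ x, ENNReal.ofReal (Φ₁ (g x)) ∂μ ≤ 1) :
    ∫⁻ x, ENNReal.ofReal (Φ₂ (g (T x) / K₀)) ∂μ ≤ 1 := by
  have hK₀pos : (0:ℝ) < K₀ := lt_of_lt_of_le one_pos hK₀1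
  -- a.e. values of |g| on atoms
  have hchoice : ∀ n, ∃ a : ℝ, ∀ᵐ x ∂μ.restrict (A n), |g x| = a := fun n =>
    ae_const_on_atom (hAm n) (hApos n) (hatom n) (hAfin n) (fun x => |g x|) hg.abs
  choose a ha using hchoice
  have han : ∀ n, 0 ≤ a n := fun n =>
    ae_val_nonneg (hApos n).ne' (fun x => abs_nonneg _) (ha n)
  set m : ℕ → ℝ := fun n => (μ (A n)).toReal with hm
  have hmpos : ∀ n, 0 < m n := fun n => ENNReal.toReal_pos (hApos n).ne' (hAfin n)
  have hμA : ∀ n, μ (A n) = ENNReal.ofReal (m n) := fun n =>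
    (ENNReal.ofReal_toReal (hAfin n)).symm
  -- the normalization sum
  have hatomint : ∀ n, ∫⁻ x in A n, ENNReal.ofReal (Φ₁ (g x)) ∂μ
      = ENNReal.ofReal (Φ₁ (a n)) * μ (A n) := by
    intro n
    have hae : (fun x => ENNReal.ofReal (Φ₁ (g x)))
        =ᵐ[μ.restrict (A n)] fun _ => ENNReal.ofReal (Φ₁ (a n)) := by
      filter_upwards [ha n] with x hx
      rw [← Φ₁.abs_eq (g x), hx]
    rw [lintegral_congr_ae hae, lintegral_const, Measure.restrict_apply_univ]
  have hsum1 : ∑' n, ENNReal.ofReal (Φ₁ (a n)) * μ (A n) ≤ 1 := by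
    calc ∑' n, ENNReal.ofReal (Φ₁ (a n)) * μ (A n)
        = ∑' n, ∫⁻ x in A n, ENNReal.ofReal (Φ₁ (g x)) ∂μ := by
          exact tsum_congr fun n => (hatomint n).symm
      _ = ∫⁻ x in ⋃ n, A n, ENNReal.ofReal (Φ₁ (g x)) ∂μ :=
          (lintegral_iUnion hAm hdisj _).symm
      _ ≤ ∫⁻ x, ENNReal.ofReal (Φ₁ (g x)) ∂μ :=
          lintegral_mono' Measure.restrict_le_self le_rfl
      _ ≤ 1 := hg1
  have htn1 : ∀ n, Φ₁ (a n) * m n ≤ 1 := by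
    intro n
    have h1 : ENNReal.ofReal (Φ₁ (a n)) * μ (A n) ≤ 1 :=
      le_trans (ENNReal.le_tsum n) hsum1
    rw [hμA n, ← ENNReal.ofReal_mul (Φ₁.nonneg _)] at h1
    exact (ENNReal.ofReal_le_one).mp h1
  -- the per-atom real inequality
  have key : ∀ n, c₀ n * Φ₂ (a n / K₀) * m n ≤ Φ₁ (a n) * m n := by
    intro n
    obtain ⟨hb0, hbΦ⟩ := Φ₁.exists_yInv (hmpos n).le
    set b : ℝ := yInv Φ₁ (m n) with hbdef
    have hbpos : 0 < b := by
      rcases eq_or_lt_of_le hb0 with h | h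
      · exfalso
        rw [← h] at hbΦ
        rw [Φ₁.zero] at hbΦ
        exact (hmpos n).ne hbΦ
      · exact h
    set t : ℝ := Φ₁ (a n) * m n with ht
    have ht0 : 0 ≤ t := mul_nonneg (Φ₁.nonneg _) (hmpos n).le
    have ht1 : t ≤ 1 := htn1 n
    have h1 : Φ₂ (a n) ≤ c₂ * Φ₂ (1/b) * Φ₂ (b * a n) := by
      have heq : a n = (1/b) * (b * a n) := by field_simp
      calc Φ₂ (a n) = Φ₂ ((1/b) * (b * a n)) := by rw [← heq]
        _ ≤ c₂ * Φ₂ (1/b) * Φ₂ (b * a n) :=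
            hD₂ _ _ (one_div_nonneg.mpr hb0) (mul_nonneg hb0 (han n))
    have h2 : Φ₂ (b * a n) = Ψ (Φ₁ (b * a n)) := by
      rw [hΨ _ (Φ₁.nonneg _), Φ₁.yInv_phi (mul_nonneg hb0 (han n))]
    have h3 : Φ₁ (b * a n) ≤ c₁ * t := by
      calc Φ₁ (b * a n) ≤ c₁ * Φ₁ b * Φ₁ (a n) := hD₁ _ _ hb0 (han n)
        _ = c₁ * t := by rw [hbΦ, ht]; ring
    have h4 : Ψ (Φ₁ (b * a n)) ≤ t * Ψ c₁ := by
      calc Ψ (Φ₁ (b * a n)) ≤ Ψ (c₁ * t) := Ψ.mono (Φ₁.nonneg _) h3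
        _ = Ψ (t * c₁) := by rw [mul_comm]
        _ ≤ t * Ψ c₁ := Ψ.scale ht0 ht1 c₁
    have e1 : Φ₂ (a n) ≤ c₂ * Φ₂ (1/b) * (t * Ψ c₁) := by
      calc Φ₂ (a n) ≤ c₂ * Φ₂ (1/b) * Φ₂ (b * a n) := h1
        _ = c₂ * Φ₂ (1/b) * Ψ (Φ₁ (b * a n)) := by rw [h2]
        _ ≤ c₂ * Φ₂ (1/b) * (t * Ψ c₁) :=
            mul_le_mul_of_nonneg_left h4 (mul_nonneg hc₂.le (Φ₂.nonneg _))
    have e2 : c₀ n * Φ₂ (a n) * m n ≤ (c₂ * Ψ c₁ * t) * (Φ₂ (1/b) * c₀ n * m n) := by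
      calc c₀ n * Φ₂ (a n) * m n
          ≤ c₀ n * (c₂ * Φ₂ (1/b) * (t * Ψ c₁)) * m n := by
            apply mul_le_mul_of_nonneg_right _ (hmpos n).le
            exact mul_le_mul_of_nonneg_left e1 (hc₀nn n)
        _ = (c₂ * Ψ c₁ * t) * (Φ₂ (1/b) * c₀ n * m n) := by ring
    have hΨc₁ : 0 ≤ Ψ c₁ := Ψ.nonneg _
    have e3 : (c₂ * Ψ c₁ * t) * (Φ₂ (1/b) * c₀ n * m n) ≤ (c₂ * Ψ c₁ * t) * M :=
      mul_le_mul_of_nonneg_left (hM n) (mul_nonneg (mul_nonneg hc₂.le hΨc₁) ht0)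
    have e4 : c₀ n * Φ₂ (a n) * m n ≤ (c₂ * Ψ c₁ * M) * t := by
      calc c₀ n * Φ₂ (a n) * m n ≤ (c₂ * Ψ c₁ * t) * M := le_trans e2 e3
        _ = (c₂ * Ψ c₁ * M) * t := by ring
    have h5 : Φ₂ (a n / K₀) ≤ (1/K₀) * Φ₂ (a n) := by
      have hsc := Φ₂.scale (t := 1/K₀) (one_div_nonneg.mpr hK₀pos.le)
        (by rw [div_le_one hK₀pos]; exact hK₀1) (a n)
      rwa [one_div_mul_eq_div] at hsc
    have e5 : c₀ n * Φ₂ (a n / K₀) * m n ≤ (1/K₀) * (c₀ n * Φ₂ (a n) * m n) := by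
      calc c₀ n * Φ₂ (a n / K₀) * m n
          ≤ c₀ n * ((1/K₀) * Φ₂ (a n)) * m n := by
            apply mul_le_mul_of_nonneg_right _ (hmpos n).le
            exact mul_le_mul_of_nonneg_left h5 (hc₀nn n)
        _ = (1/K₀) * (c₀ n * Φ₂ (a n) * m n) := by ring
    have e6 : (1/K₀) * (c₀ n * Φ₂ (a n) * m n) ≤ (1/K₀) * ((c₂ * Ψ c₁ * M) * t) :=
      mul_le_mul_of_nonneg_left e4 (one_div_nonneg.mpr hK₀pos.le)
    have e7 : (1/K₀) * ((c₂ * Ψ c₁ * M) * t) ≤ t := by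
      have h8 : (c₂ * Ψ c₁ * M) * t ≤ K₀ * t := mul_le_mul_of_nonneg_right hDK₀ ht0
      have h9 : (1/K₀) * ((c₂ * Ψ c₁ * M) * t) ≤ (1/K₀) * (K₀ * t) :=
        mul_le_mul_of_nonneg_left h8 (one_div_nonneg.mpr hK₀pos.le)
      calc (1/K₀) * ((c₂ * Ψ c₁ * M) * t) ≤ (1/K₀) * (K₀ * t) := h9
        _ = t := by field_simp
    calc c₀ n * Φ₂ (a n / K₀) * m n ≤ (1/K₀) * (c₀ n * Φ₂ (a n) * m n) := e5
      _ ≤ (1/K₀) * ((c₂ * Ψ c₁ * M) * t) := e6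
      _ ≤ t := e7
  -- the change of variables and the sum
  have hFm : Measurable fun y => ENNReal.ofReal (Φ₂ (g y / K₀)) :=
    ENNReal.measurable_ofReal.comp (Φ₂.continuous'.measurable.comp (hg.div_const _))
  have hmapeq : μ.map T = μ.withDensity (fun x => ENNReal.ofReal (f₀ x)) := by
    ext s hs
    rw [hf₀ s hs, withDensity_apply _ hs]
  calc ∫⁻ x, ENNReal.ofReal (Φ₂ (g (T x) / K₀)) ∂μ
      = ∫⁻ y, ENNReal.ofReal (Φ₂ (g y / K₀)) ∂(μ.map T) := (lintegral_map hFm hT).symm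
    _ = ∫⁻ y, ENNReal.ofReal (f₀ y) * ENNReal.ofReal (Φ₂ (g y / K₀)) ∂μ := by
        rw [hmapeq, lintegral_withDensity_eq_lintegral_mul _
          hf₀m.ennreal_ofReal hFm]
        rfl
    _ = ∫⁻ y in (⋃ n, A n) ∪ B, ENNReal.ofReal (f₀ y) * ENNReal.ofReal (Φ₂ (g y / K₀)) ∂μ := by
        rw [hcover, setLIntegral_univ]
    _ = (∫⁻ y in ⋃ n, A n, ENNReal.ofReal (f₀ y) * ENNReal.ofReal (Φ₂ (g y / K₀)) ∂μ)
        + ∫⁻ y in B, ENNReal.ofReal (f₀ y) * ENNReal.ofReal (Φ₂ (g y / K₀)) ∂μ := by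
        exact lintegral_union hBm (Set.disjoint_iUnion_left.mpr hAB)
    _ ≤ 1 := by
        have hBzero : ∫⁻ y in B, ENNReal.ofReal (f₀ y) * ENNReal.ofReal (Φ₂ (g y / K₀)) ∂μ
            = 0 := by
          have hae : (fun y => ENNReal.ofReal (f₀ y) * ENNReal.ofReal (Φ₂ (g y / K₀)))
              =ᵐ[μ.restrict B] fun _ => 0 := by
            filter_upwards [hB0] with x hx
            rw [hx]
            simp
          rw [lintegral_congr_ae hae, lintegral_zero]
        have hatomint2 : ∀ n, ∫⁻ y in A n,
            ENNReal.ofReal (f₀ y) * ENNReal.ofReal (Φ₂ (g y / K₀)) ∂μ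
            = ENNReal.ofReal (c₀ n * Φ₂ (a n / K₀)) * μ (A n) := by
          intro n
          have hae : (fun y => ENNReal.ofReal (f₀ y) * ENNReal.ofReal (Φ₂ (g y / K₀)))
              =ᵐ[μ.restrict (A n)] fun _ => ENNReal.ofReal (c₀ n * Φ₂ (a n / K₀)) := by
            filter_upwards [hc₀ n, ha n] with x hx1 hx2
            have hgx : Φ₂ (g x / K₀) = Φ₂ (a n / K₀) := by
              rw [← Φ₂.abs_eq (g x / K₀), abs_div, abs_of_pos hK₀pos, hx2]
            rw [hx1, hgx, ENNReal.ofReal_mul (hc₀nn n)]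
          rw [lintegral_congr_ae hae, lintegral_const, Measure.restrict_apply_univ]
        rw [hBzero, add_zero, lintegral_iUnion hAm hdisj]
        calc ∑' n, ∫⁻ y in A n,
              ENNReal.ofReal (f₀ y) * ENNReal.ofReal (Φ₂ (g y / K₀)) ∂μ
            = ∑' n, ENNReal.ofReal (c₀ n * Φ₂ (a n / K₀)) * μ (A n) :=
              tsum_congr hatomint2
          _ ≤ ∑' n, ENNReal.ofReal (Φ₁ (a n)) * μ (A n) := by
              apply ENNReal.tsum_le_tsum
              intro n
              rw [hμA n, ← ENNReal.ofReal_mul (mul_nonneg (hc₀nn n) (Φ₂.nonneg _)),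
                ← ENNReal.ofReal_mul (Φ₁.nonneg _)]
              exact ENNReal.ofReal_le_ofReal (key n)
          _ ≤ 1 := hsum1

/-- sufficient conditions for boundedness of the composition operator
when `Φ₁, Φ₂ ∈ Δ'` and `Φ₂ ∘ Φ₁⁻¹` is a Young function. -/
theorem composition_bounded_sufficient
    {X : Type*} [MeasurableSpace X] (μ : Measure X) [SigmaFinite μ]
    (A : ℕ → Set X) (B : Set X) (hdec : AtomicDecomposition μ A B)
    (Φ₁ Φ₂ : YoungFunction) (c₁ c₂ : ℝ)
    (hΔ₁ : YoungDeltaPrime Φ₁ c₁) (hΔ₂ : YoungDeltaPrime Φ₂ c₂)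
    (hcomp : ∃ Ψ : YoungFunction, ∀ x : ℝ, 0 ≤ x → Ψ x = Φ₂ (yInv Φ₁ x))
    (T : X → X) (hT : Measurable T) (hns : μ.map T ≪ μ)
    (f₀ : X → ℝ) (hf₀m : Measurable f₀) (hf₀nn : ∀ x, 0 ≤ f₀ x)
    (hf₀ : ∀ S : Set X, MeasurableSet S →
      μ.map T S = ∫⁻ x in S, ENNReal.ofReal (f₀ x) ∂μ)
    (c₀ : ℕ → ℝ) (hc₀ : ∀ n, ∀ᵐ x ∂μ.restrict (A n), f₀ x = c₀ n)
    (hB : ∀ᵐ x ∂μ.restrict B, f₀ x = 0)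
    (hsup : ∃ M : ℝ, ∀ n,
      Φ₂ (1 / yInv Φ₁ (μ (A n)).toReal) * c₀ n * (μ (A n)).toReal ≤ M) :
    OrliczBounded Φ₁ Φ₂ μ (fun f x => f (T x)) := by
  obtain ⟨hatoms, hfinA, hdisj, hdisjB, hBm, hBna, hcover⟩ := hdec
  obtain ⟨Ψ, hΨ⟩ := hcomp
  obtain ⟨M, hM⟩ := hsup
  obtain ⟨hc₁pos, hΔ₁'⟩ := hΔ₁
  obtain ⟨hc₂pos, hΔ₂'⟩ := hΔ₂
  have hAm : ∀ n, MeasurableSet (A n) := fun n => (hatoms n).1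
  have hApos : ∀ n, 0 < μ (A n) := fun n => (hatoms n).2.1
  have hAfin : ∀ n, μ (A n) ≠ ⊤ := fun n => (hfinA n).ne
  have hc₀nn : ∀ n, 0 ≤ c₀ n := fun n =>
    ae_val_nonneg (hApos n).ne' hf₀nn (hc₀ n)
  set D : ℝ := c₂ * Ψ c₁ * M with hD
  set K₀ : ℝ := max D 1 with hK₀
  have hK₀1 : 1 ≤ K₀ := le_max_right _ _
  have hK₀pos : (0:ℝ) < K₀ := lt_of_lt_of_le one_pos hK₀1
  have hDK₀ : c₂ * Ψ c₁ * M ≤ K₀ := le_max_left _ _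
  have core : ∀ g : X → ℝ, Measurable g →
      ∫⁻ x, ENNReal.ofReal (Φ₁ (g x)) ∂μ ≤ 1 →
      ∫⁻ x, ENNReal.ofReal (Φ₂ (g (T x) / K₀)) ∂μ ≤ 1 := fun g hg hg1 =>
    core_lemma μ A B hAm hApos hAfin (fun n => (hatoms n).2.2) hdisj hBm hdisjB hcover
      Φ₁ Φ₂ Ψ c₁ c₂ hc₁pos hc₂pos hΔ₁' hΔ₂' hΨ T hT f₀ hf₀m hf₀nn hf₀
      c₀ hc₀ hc₀nn hB M K₀ hM hK₀1 hDK₀ g hg hg1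
  refine ⟨K₀, hK₀pos, ?_⟩
  intro f hf
  obtain ⟨hfm, k, hkpos, hint⟩ := hf
  -- measurable representative
  have hfam : AEMeasurable f μ := hfm.aemeasurable
  set f' : X → ℝ := hfam.mk f with hf'def
  have hf'm : Measurable f' := hfam.measurable_mk
  have hff' : f =ᵐ[μ] f' := hfam.ae_eq_mk
  have hqmp : Measure.QuasiMeasurePreserving T μ μ := ⟨hT, hns⟩
  have hffT : (fun x => f (T x)) =ᵐ[μ] fun x => f' (T x) := hqmp.ae_eq_comp hff'
  have hfTm : AEStronglyMeasurable (fun x => f (T x)) μ :=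
    ((hf'm.comp hT).aestronglyMeasurable).congr hffT.symm
  -- integrability at all scales
  have hintAll : ∀ l : ℝ, 0 ≤ l → Integrable (fun x => Φ₁ (l * f x)) μ := by
    intro l hl
    refine Integrable.mono' (g := fun x => c₁ * Φ₁ (l/k) * Φ₁ (k * f x))
      ((hint.const_mul _)) ?_ ?_
    · exact Φ₁.continuous'.comp_aestronglyMeasurable (hfm.const_mul l)
    · refine ae_of_all _ fun x => ?_
      rw [Real.norm_eq_abs, abs_of_nonneg (Φ₁.nonneg _)]
      have habs : (l/k) * |k * f x| = |l * f x| := by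
        rw [abs_mul, abs_of_pos hkpos, abs_mul, abs_of_nonneg hl]
        field_simp
      have heq : Φ₁ (l * f x) = Φ₁ ((l/k) * |k * f x|) := by
        rw [← Φ₁.abs_eq (l * f x), ← habs]
      rw [heq]
      calc Φ₁ ((l/k) * |k * f x|)
          ≤ c₁ * Φ₁ (l/k) * Φ₁ (|k * f x|) :=
            hΔ₁' _ _ (div_nonneg hl hkpos.le) (abs_nonneg _)
        _ = c₁ * Φ₁ (l/k) * Φ₁ (k * f x) := by rw [Φ₁.abs_eq]
  -- a first element of the defining set for the Φ₁-norm of f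
  have hIset : ∃ k₁ : ℝ, 0 < k₁ ∧ ∫ x, Φ₁ (f x / k₁) ∂μ ≤ 1 := by
    set I : ℝ := ∫ x, Φ₁ (k * f x) ∂μ with hI
    have hInn : 0 ≤ I := integral_nonneg fun x => Φ₁.nonneg _
    set k₁ : ℝ := max 1 I / k with hk₁
    have hmaxpos : (0:ℝ) < max 1 I := lt_of_lt_of_le one_pos (le_max_left _ _)
    have hk₁pos : 0 < k₁ := div_pos hmaxpos hkpos
    refine ⟨k₁, hk₁pos, ?_⟩
    have hptw : ∀ x, Φ₁ (f x / k₁) ≤ (1 / max 1 I) * Φ₁ (k * f x) := by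
      intro x
      have heq : f x / k₁ = (1 / max 1 I) * (k * f x) := by
        rw [hk₁]
        field_simp
      rw [heq]
      exact Φ₁.scale (one_div_nonneg.mpr hmaxpos.le)
        (by rw [div_le_one hmaxpos]; exact le_max_left _ _) _
    have hi1 : Integrable (fun x => Φ₁ (f x / k₁)) μ := by
      have := hintAll (1/k₁) (one_div_nonneg.mpr hk₁pos.le)
      refine this.congr (ae_of_all _ fun x => ?_)
      simp only [one_div_mul_eq_div]
    calc ∫ x, Φ₁ (f x / k₁) ∂μ
        ≤ ∫ x, (1 / max 1 I) * Φ₁ (k * f x) ∂μ :=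
          integral_mono hi1 ((hint.const_mul _)) hptw
      _ = (1 / max 1 I) * I := by rw [integral_const_mul]
      _ ≤ 1 := by
          rw [one_div_mul_eq_div, div_le_one hmaxpos]
          exact le_max_right _ _
  obtain ⟨k₁, hk₁pos, hk₁le⟩ := hIset
  -- main step : scaling transfer
  have hstep : ∀ k' : ℝ, 0 < k' → (∫ x, Φ₁ (f x / k') ∂μ ≤ 1) →
      (∫ x, Φ₂ (f (T x) / (K₀ * k')) ∂μ ≤ 1) ∧
        Integrable (fun x => Φ₂ (f (T x) / (K₀ * k'))) μ := by
    intro k' hk'pos hk'int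
    have hi : Integrable (fun x => Φ₁ (f x / k')) μ := by
      have := hintAll (1/k') (one_div_nonneg.mpr hk'pos.le)
      refine this.congr (ae_of_all _ fun x => ?_)
      simp only [one_div_mul_eq_div]
    have hnn : 0 ≤ᵐ[μ] fun x => Φ₁ (f x / k') := ae_of_all _ fun x => Φ₁.nonneg _
    have hl1 : ∫⁻ x, ENNReal.ofReal (Φ₁ (f x / k')) ∂μ ≤ 1 := by
      rw [← ofReal_integral_eq_lintegral_ofReal hi hnn]
      exact ENNReal.ofReal_le_one.mpr hk'int
    have hl1' : ∫⁻ x, ENNReal.ofReal (Φ₁ (f' x / k')) ∂μ ≤ 1 := by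
      refine le_trans (le_of_eq (lintegral_congr_ae ?_)) hl1
      filter_upwards [hff'] with x hx
      rw [hx]
    have hcore := core (fun x => f' x / k') (hf'm.div_const k') hl1'
    have hdiv : ∀ y : ℝ, y / k' / K₀ = y / (K₀ * k') := fun y => by
      rw [div_div, mul_comm]
    have hlf : ∫⁻ x, ENNReal.ofReal (Φ₂ (f (T x) / (K₀ * k'))) ∂μ ≤ 1 := by
      have heq1 : (fun x => ENNReal.ofReal (Φ₂ (f (T x) / (K₀ * k'))))
          =ᵐ[μ] fun x => ENNReal.ofReal (Φ₂ (f' (T x) / (K₀ * k'))) := by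
        filter_upwards [hffT] with x hx
        rw [hx]
      have heq2 : ∫⁻ x, ENNReal.ofReal (Φ₂ (f' (T x) / (K₀ * k'))) ∂μ
          = ∫⁻ x, ENNReal.ofReal (Φ₂ (f' (T x) / k' / K₀)) ∂μ :=
        lintegral_congr fun x => by rw [hdiv]
      rw [lintegral_congr_ae heq1, heq2]
      exact hcore
    have hasm2 : AEStronglyMeasurable (fun x => Φ₂ (f (T x) / (K₀ * k'))) μ :=
      Φ₂.continuous'.comp_aestronglyMeasurable
        (by simpa [div_eq_mul_inv] using hfTm.mul_const (K₀ * k')⁻¹)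
    have hfin2 : HasFiniteIntegral (fun x => Φ₂ (f (T x) / (K₀ * k'))) μ := by
      rw [hasFiniteIntegral_iff_norm]
      have : ∫⁻ x, ENNReal.ofReal ‖Φ₂ (f (T x) / (K₀ * k'))‖ ∂μ
          = ∫⁻ x, ENNReal.ofReal (Φ₂ (f (T x) / (K₀ * k'))) ∂μ := by
        refine lintegral_congr fun x => ?_
        rw [Real.norm_eq_abs, abs_of_nonneg (Φ₂.nonneg _)]
      rw [this]
      exact lt_of_le_of_lt hlf ENNReal.one_lt_top
    have hint2 : Integrable (fun x => Φ₂ (f (T x) / (K₀ * k'))) μ := ⟨hasm2, hfin2⟩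
    have hbint : ∫ x, Φ₂ (f (T x) / (K₀ * k')) ∂μ ≤ 1 := by
      apply ENNReal.ofReal_le_one.mp
      rw [ofReal_integral_eq_lintegral_ofReal hint2
        (ae_of_all _ fun x => Φ₂.nonneg _)]
      exact hlf
    exact ⟨hbint, hint2⟩
  constructor
  · -- membership
    refine ⟨hfTm, (K₀ * k₁)⁻¹, by positivity, ?_⟩
    have := (hstep k₁ hk₁pos hk₁le).2
    refine this.congr (ae_of_all _ fun x => ?_)
    simp only [inv_mul_eq_div]
  · -- norm bound
    have hub : ∀ k' : ℝ, 0 < k' → (∫ x, Φ₁ (f x / k') ∂μ ≤ 1) →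
        luxNorm Φ₂ μ (fun x => f (T x)) ≤ K₀ * k' := by
      intro k' hk'pos hk'le
      obtain ⟨h1, _⟩ := hstep k' hk'pos hk'le
      apply csInf_le
      · exact ⟨0, fun y hy => hy.1.le⟩
      · exact ⟨by positivity, h1⟩
    have hSne : {k' : ℝ | 0 < k' ∧ ∫ x, Φ₁ (f x / k') ∂μ ≤ 1}.Nonempty :=
      ⟨k₁, hk₁pos, hk₁le⟩
    have hgoal : luxNorm Φ₂ μ (fun x => f (T x)) / K₀
        ≤ luxNorm Φ₁ μ f := by
      show _ ≤ sInf {k' : ℝ | 0 < k' ∧ ∫ x, Φ₁ (f x / k') ∂μ ≤ 1}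
      apply le_csInf hSne
      intro k' hk'
      rw [div_le_iff₀ hK₀pos]
      calc luxNorm Φ₂ μ (fun x => f (T x)) ≤ K₀ * k' := hub k' hk'.1 hk'.2
        _ = k' * K₀ := mul_comm _ _
    calc luxNorm Φ₂ μ (fun x => f (T x))
        = K₀ * (luxNorm Φ₂ μ (fun x => f (T x)) / K₀) := by field_simp
      _ ≤ K₀ * luxNorm Φ₁ μ f :=
          mul_le_mul_of_nonneg_left hgoal hK₀pos.le
end

section
/- Let T be a non-singular measurable transformation on X with Radon–Nikodym derivative f₀ = d(μ∘T⁻¹)/dμ, and let Φ₂ ∈ ∇' be a Young function. Then for every f in the domain of M_{Φ₂⁻¹(f₀)} in L^{Φ₁}(Σ), one has ‖C_T f‖_{Φ₂} ≤ b‖M_{Φ₂⁻¹(f₀)} f‖_{Φ₂}, where b is the ∇' constant of Φ₂. -/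
open MeasureTheory Filter Topology

variable {X : Type*} [MeasurableSpace X]

section AuxYoung

lemma young_zero (Φ : YoungFunction) : Φ 0 = 0 := (Φ.zero_iff' 0).mpr rfl

lemma young_nonneg (Φ : YoungFunction) (x : ℝ) : 0 ≤ Φ x := by
  have h := Φ.convexOn'.2 (Set.mem_univ x) (Set.mem_univ (-x))
    (by norm_num : (0:ℝ) ≤ 1/2) (by norm_num : (0:ℝ) ≤ 1/2)
    (by norm_num : (1:ℝ)/2 + 1/2 = 1)
  simp only [smul_eq_mul] at h
  have hx : (1/2 : ℝ) * x + (1/2 : ℝ) * (-x) = 0 := by ring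
  rw [hx, young_zero, Φ.even' x] at h
  linarith

lemma young_pos (Φ : YoungFunction) {x : ℝ} (hx : x ≠ 0) : 0 < Φ x :=
  (young_nonneg Φ x).lt_of_ne
    (fun h => hx ((Φ.zero_iff' x).mp h.symm))

lemma young_abs (Φ : YoungFunction) (x : ℝ) : Φ |x| = Φ x := by
  rcases abs_cases x with ⟨h, _⟩ | ⟨h, _⟩
  · rw [h]
  · rw [h, Φ.even' x]

lemma young_mono (Φ : YoungFunction) {x y : ℝ} (hx : 0 ≤ x) (hxy : x ≤ y) :
    Φ x ≤ Φ y := by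
  rcases eq_or_lt_of_le (hx.trans hxy) with h0 | hy
  · have hx0 : x = 0 := le_antisymm (hxy.trans h0.symm.le) hx
    rw [hx0, ← h0]
  · have h := Φ.convexOn'.2 (Set.mem_univ (0:ℝ)) (Set.mem_univ y)
      (show (0:ℝ) ≤ 1 - x / y by rw [sub_nonneg]; exact div_le_one_of_le₀ hxy hy.le)
      (show (0:ℝ) ≤ x / y by positivity)
      (show (1 - x / y) + x / y = 1 by ring)
    simp only [smul_eq_mul] at h
    have he : (1 - x / y) * (0:ℝ) + (x / y) * y = x := by
      field_simp
      ring
    rw [he, young_zero, mul_zero, zero_add] at h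
    calc Φ x ≤ x / y * Φ y := h
      _ ≤ 1 * Φ y := by
          apply mul_le_mul_of_nonneg_right _ (young_nonneg Φ y)
          exact div_le_one_of_le₀ hxy hy.le
      _ = Φ y := one_mul _

lemma young_div_le (Φ : YoungFunction) {c : ℝ} (hc : 1 ≤ c) (t : ℝ) :
    Φ (t / c) ≤ Φ t / c := by
  have hc0 : 0 < c := lt_of_lt_of_le one_pos hc
  have h := Φ.convexOn'.2 (Set.mem_univ t) (Set.mem_univ (0:ℝ))
    (show (0:ℝ) ≤ 1 / c by positivity)
    (show (0:ℝ) ≤ 1 - 1 / c by rw [sub_nonneg]; exact div_le_one_of_le₀ hc hc0.le)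
    (show (1:ℝ) / c + (1 - 1 / c) = 1 by ring)
  simp only [smul_eq_mul] at h
  have he : (1 / c) * t + (1 - 1 / c) * (0:ℝ) = t / c := by ring
  rw [he, young_zero, mul_zero, add_zero] at h
  calc Φ (t / c) ≤ 1 / c * Φ t := h
    _ = Φ t / c := by ring

lemma young_tendsto_atTop (Φ : YoungFunction) : Tendsto Φ.toFun atTop atTop := by
  refine tendsto_atTop_mono' atTop ?_ Φ.tendsto_atTop'
  filter_upwards [eventually_ge_atTop (1:ℝ)] with x hx
  exact div_le_self (young_nonneg Φ x) hx

lemma yInv_set_nonempty (Φ : YoungFunction) {y : ℝ} (hy : 0 ≤ y) :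
    {x : ℝ | 0 ≤ x ∧ Φ x ≤ y}.Nonempty :=
  ⟨0, le_refl 0, by rw [young_zero]; exact hy⟩

lemma yInv_set_bddAbove (Φ : YoungFunction) (y : ℝ) :
    BddAbove {x : ℝ | 0 ≤ x ∧ Φ x ≤ y} := by
  obtain ⟨M, hM⟩ := eventually_atTop.mp
    ((young_tendsto_atTop Φ).eventually_ge_atTop (y + 1))
  refine ⟨M, fun x hx => ?_⟩
  by_contra h
  push_neg at h
  have := hM x h.le
  have := hx.2
  linarith

lemma yInv_nonneg (Φ : YoungFunction) {y : ℝ} (hy : 0 ≤ y) : 0 ≤ yInv Φ y :=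
  le_csSup (yInv_set_bddAbove Φ y) ⟨le_refl 0, by rw [young_zero]; exact hy⟩

lemma young_apply_yInv (Φ : YoungFunction) {y : ℝ} (hy : 0 ≤ y) :
    Φ (yInv Φ y) = y := by
  have hne := yInv_set_nonempty Φ hy
  have hbdd := yInv_set_bddAbove Φ y
  have hcl : IsClosed {x : ℝ | 0 ≤ x ∧ Φ x ≤ y} := by
    rw [Set.setOf_and]
    exact (isClosed_le continuous_const continuous_id).inter
      (isClosed_le Φ.continuous' continuous_const)
  have hmem : yInv Φ y ∈ {x : ℝ | 0 ≤ x ∧ Φ x ≤ y} := hcl.csSup_mem hne hbdd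
  refine le_antisymm hmem.2 ?_
  by_contra hlt
  push_neg at hlt
  have hnhds : {t : ℝ | Φ t < y} ∈ 𝓝 (yInv Φ y) :=
    Φ.continuous'.continuousAt.preimage_mem_nhds (Iio_mem_nhds hlt)
  have hev : ∀ᶠ t in 𝓝[>] (yInv Φ y), Φ t < y :=
    eventually_nhdsWithin_of_eventually_nhds hnhds
  obtain ⟨t, htΦ, hts⟩ := (hev.and (eventually_mem_nhdsWithin)).exists
  have htmem : t ∈ {x : ℝ | 0 ≤ x ∧ Φ x ≤ y} :=
    ⟨hmem.1.trans (le_of_lt hts), htΦ.le⟩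
  exact absurd (le_csSup hbdd htmem) (not_le.mpr hts)

end AuxYoung

/-- `‖C_T f‖_{Φ₂} ≤ b ‖M_{Φ₂⁻¹(f₀)} f‖_{Φ₂}` when `Φ₂ ∈ ∇'`. -/
theorem luxNorm_comp_le
    {X : Type*} [MeasurableSpace X] (μ : Measure X)
    (Φ₁ Φ₂ : YoungFunction) (b : ℝ) (hΦ₂ : YoungNablaPrime Φ₂ b)
    (T : X → X) (hT : Measurable T) (hns : μ.map T ≪ μ)
    (f₀ : X → ℝ) (hf₀m : Measurable f₀) (hf₀nn : ∀ x, 0 ≤ f₀ x)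
    (hf₀ : ∀ S : Set X, MeasurableSet S →
      μ.map T S = ∫⁻ x in S, ENNReal.ofReal (f₀ x) ∂μ)
    (f : X → ℝ) (hf : MemOrlicz Φ₁ μ f)
    (hfd : MemOrlicz Φ₂ μ (fun x => yInv Φ₂ (f₀ x) * f x)) :
    luxNorm Φ₂ μ (fun x => f (T x)) ≤
      b * luxNorm Φ₂ μ (fun x => yInv Φ₂ (f₀ x) * f x) := by
  obtain ⟨hb, hnab⟩ := hΦ₂
  obtain ⟨hgm, k₀, hk₀, hint⟩ := hfd
  set u : X → ℝ := fun x => yInv Φ₂ (f₀ x) with hu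
  -- integrability of `Φ₂ (g / k)` for every `k > 0`, via the ∇' condition
  have hgint : ∀ k : ℝ, 0 < k →
      Integrable (fun x => Φ₂ (u x * f x / k)) μ := by
    intro k hk
    have hCpos : 0 < Φ₂ (k * k₀ / b) := young_pos Φ₂ (by positivity)
    have hmeas : AEStronglyMeasurable (fun x => Φ₂ (u x * f x / k)) μ :=
      (Φ₂.continuous'.comp (continuous_id.div_const k)).comp_aestronglyMeasurable hgm
    refine (hint.const_mul (Φ₂ (k * k₀ / b))⁻¹).mono' hmeas ?_
    refine Filter.Eventually.of_forall fun x => ?_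
    rw [Real.norm_of_nonneg (young_nonneg _ _)]
    have h2 := hnab (|u x * f x| / k) (k * k₀ / b) (by positivity) (by positivity)
    have e1 : Φ₂ (|u x * f x| / k) = Φ₂ (u x * f x / k) := by
      rw [show |u x * f x| / k = |u x * f x / k| by
        rw [abs_div, abs_of_pos hk], young_abs]
    have e2 : b * (|u x * f x| / k) * (k * k₀ / b) = k₀ * |u x * f x| := by
      field_simp
    have e3 : Φ₂ (k₀ * |u x * f x|) = Φ₂ (k₀ * (u x * f x)) := by
      rw [show k₀ * |u x * f x| = |k₀ * (u x * f x)| by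
        rw [abs_mul k₀ (u x * f x), abs_of_pos hk₀], young_abs]
    rw [e1, e2, e3] at h2
    rw [inv_mul_eq_div, le_div_iff₀ hCpos]
    exact h2
  -- the defining set for the Luxemburg norm of `g` is nonempty
  have hSg_ne : {k : ℝ | 0 < k ∧ ∫ x, Φ₂ (u x * f x / k) ∂μ ≤ 1}.Nonempty := by
    have hInn : (0:ℝ) ≤ ∫ x, Φ₂ (k₀ * (u x * f x)) ∂μ :=
      integral_nonneg fun x => young_nonneg _ _
    set c : ℝ := max 1 (∫ x, Φ₂ (k₀ * (u x * f x)) ∂μ) with hc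
    have hc1 : 1 ≤ c := le_max_left _ _
    have hcpos : (0:ℝ) < c := lt_of_lt_of_le one_pos hc1
    refine ⟨c / k₀, by positivity, ?_⟩
    have hpt : (fun x => Φ₂ (u x * f x / (c / k₀)))
        ≤ fun x => Φ₂ (k₀ * (u x * f x)) / c := by
      intro x
      dsimp only
      have he : u x * f x / (c / k₀) = k₀ * (u x * f x) / c := by
        field_simp
      rw [he]
      exact young_div_le Φ₂ hc1 _
    calc ∫ x, Φ₂ (u x * f x / (c / k₀)) ∂μ
        ≤ ∫ x, Φ₂ (k₀ * (u x * f x)) / c ∂μ :=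
          integral_mono (hgint _ (by positivity)) (hint.div_const c) hpt
      _ = (∫ x, Φ₂ (k₀ * (u x * f x)) ∂μ) / c := integral_div c _
      _ ≤ 1 := by rw [div_le_one hcpos]; exact le_max_right _ _
  -- the pushforward measure has density `f₀`
  have hmapT : μ.map T = μ.withDensity (fun x => ENNReal.ofReal (f₀ x)) := by
    ext S hS
    rw [hf₀ S hS, withDensity_apply _ hS]
  -- main step : if `k` is admissible for `g` then `b * k` is admissible for `f ∘ T`
  have key : ∀ k : ℝ, 0 < k → (∫ x, Φ₂ (u x * f x / k) ∂μ ≤ 1) →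
      (0 < b * k ∧ ∫ x, Φ₂ (f (T x) / (b * k)) ∂μ ≤ 1) := by
    intro k hk hle
    have hbk : 0 < b * k := mul_pos hb hk
    have hGnn : 0 ≤ᵐ[μ] fun x => Φ₂ (u x * f x / k) :=
      Filter.Eventually.of_forall fun x => young_nonneg _ _
    have hlin : ∫⁻ x, ENNReal.ofReal (Φ₂ (u x * f x / k)) ∂μ ≤ 1 := by
      rw [← ofReal_integral_eq_lintegral_ofReal (hgint k hk) hGnn]
      exact ENNReal.ofReal_le_one.mpr hle
    have hfmap : AEStronglyMeasurable f (μ.map T) :=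
      AEStronglyMeasurable.mono_ac hns hf.1
    have hfT : AEStronglyMeasurable (fun x => f (T x)) μ :=
      hfmap.comp_aemeasurable hT.aemeasurable
    have hφm : AEStronglyMeasurable (fun x => Φ₂ (f (T x) / (b * k))) μ :=
      (Φ₂.continuous'.comp (continuous_id.div_const (b * k))).comp_aestronglyMeasurable hfT
    have hmeas2 : AEMeasurable (fun y => ENNReal.ofReal (Φ₂ (f y / (b * k)))) (μ.map T) :=
      ((Φ₂.continuous'.comp
        (continuous_id.div_const (b * k))).comp_aestronglyMeasurable
          hfmap).aemeasurable.ennreal_ofReal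
    have hstep1 : ∫⁻ x, ENNReal.ofReal (Φ₂ (f (T x) / (b * k))) ∂μ
        = ∫⁻ y, ENNReal.ofReal (Φ₂ (f y / (b * k))) ∂(μ.map T) :=
      (lintegral_map' hmeas2 hT.aemeasurable).symm
    have hstep2 : ∫⁻ y, ENNReal.ofReal (Φ₂ (f y / (b * k))) ∂(μ.map T)
        = ∫⁻ x, ENNReal.ofReal (f₀ x) * ENNReal.ofReal (Φ₂ (f x / (b * k))) ∂μ := by
      rw [hmapT] at hmeas2 ⊢
      rw [lintegral_withDensity_eq_lintegral_mul₀' hf₀m.ennreal_ofReal.aemeasurable hmeas2]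
      rfl
    have hpt : ∀ x, ENNReal.ofReal (f₀ x) * ENNReal.ofReal (Φ₂ (f x / (b * k)))
        ≤ ENNReal.ofReal (Φ₂ (u x * f x / k)) := by
      intro x
      rw [← ENNReal.ofReal_mul (hf₀nn x)]
      apply ENNReal.ofReal_le_ofReal
      have hux : 0 ≤ u x := yInv_nonneg Φ₂ (hf₀nn x)
      have h2 := hnab (u x) (|f x| / (b * k)) hux (by positivity)
      have e0 : Φ₂ (u x) = f₀ x := young_apply_yInv Φ₂ (hf₀nn x)
      have e1 : Φ₂ (|f x| / (b * k)) = Φ₂ (f x / (b * k)) := by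
        rw [show |f x| / (b * k) = |f x / (b * k)| by
          rw [abs_div, abs_of_pos hbk], young_abs]
      have e2 : b * u x * (|f x| / (b * k)) = u x * |f x| / k := by
        field_simp
      have e3 : Φ₂ (u x * |f x| / k) = Φ₂ (u x * f x / k) := by
        rw [show u x * |f x| / k = |u x * f x / k| by
          rw [abs_div, abs_of_pos hk, abs_mul (u x) (f x), abs_of_nonneg hux], young_abs]
      calc f₀ x * Φ₂ (f x / (b * k))
          = Φ₂ (u x) * Φ₂ (|f x| / (b * k)) := by rw [e0, e1]
        _ ≤ Φ₂ (b * u x * (|f x| / (b * k))) := h2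
        _ = Φ₂ (u x * f x / k) := by rw [e2, e3]
    have hlin2 : ∫⁻ x, ENNReal.ofReal (Φ₂ (f (T x) / (b * k))) ∂μ ≤ 1 := by
      rw [hstep1, hstep2]
      exact le_trans (lintegral_mono fun x => hpt x) hlin
    have hφnn : 0 ≤ᵐ[μ] fun x => Φ₂ (f (T x) / (b * k)) :=
      Filter.Eventually.of_forall fun x => young_nonneg _ _
    have hφint : Integrable (fun x => Φ₂ (f (T x) / (b * k))) μ := by
      refine ⟨hφm, ?_⟩
      rw [hasFiniteIntegral_iff_ofReal hφnn]
      exact lt_of_le_of_lt hlin2 ENNReal.one_lt_top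
    refine ⟨hbk, ?_⟩
    rw [integral_eq_lintegral_of_nonneg_ae hφnn hφm]
    calc (∫⁻ x, ENNReal.ofReal (Φ₂ (f (T x) / (b * k))) ∂μ).toReal
        ≤ (1 : ENNReal).toReal := ENNReal.toReal_mono ENNReal.one_ne_top hlin2
      _ = 1 := by simp
  -- conclude via properties of `sInf`
  simp only [luxNorm]
  have hbdd : BddBelow {k : ℝ | 0 < k ∧ ∫ x, Φ₂ (f (T x) / k) ∂μ ≤ 1} :=
    ⟨0, fun k hk => le_of_lt hk.1⟩
  have hfinal : sInf {k : ℝ | 0 < k ∧ ∫ x, Φ₂ (f (T x) / k) ∂μ ≤ 1} / b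
      ≤ sInf {k : ℝ | 0 < k ∧ ∫ x, Φ₂ (u x * f x / k) ∂μ ≤ 1} := by
    apply le_csInf hSg_ne
    intro k hk
    rw [div_le_iff₀ hb]
    have hmem : b * k ∈ {k : ℝ | 0 < k ∧ ∫ x, Φ₂ (f (T x) / k) ∂μ ≤ 1} :=
      key k hk.1 hk.2
    have := csInf_le hbdd hmem
    linarith
  rw [mul_comm]
  exact (div_le_iff₀ hb).mp hfinal
end

section
/- Let 1 < p < q < ∞ and let (X, Σ, μ) be σ-finite with atomic decomposition X = (⋃ₙ Aₙ) ∪ B. The multiplication operator M_u: L^p(Σ) → L^q(Σ) is bounded if and only if (i) u = 0 μ-a.e. on B and (ii) sup_n |u(Aₙ)|^r / μ(Aₙ) < ∞, where 1/r = 1/p − 1/q. -/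
open MeasureTheory Filter Topology

variable {X : Type*} [MeasurableSpace X]

lemma exists_ae_const_of_isAtom {X : Type*} [MeasurableSpace X] {μ : Measure X} {A : Set X}
    (hA : IsAtomSet μ A) (hfin : μ A < ⊤) {g : X → ℝ} (hg : Measurable g) :
    ∃ c : ℝ, ∀ᵐ x ∂μ.restrict A, g x = c := by
  set ν := μ.restrict A with hν
  set t := μ A with ht
  have hνuniv : ν Set.univ = t := by simp [hν, ht]
  have hato : ∀ s : Set X, MeasurableSet s → ν s = 0 ∨ ν s = t := by
    intro s hs
    rw [hν, Measure.restrict_apply hs]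
    exact hA.2.2 (s ∩ A) (hs.inter hA.1) Set.inter_subset_right
  have htpos : 0 < t := hA.2.1
  have hle : ∀ s : Set X, ν s ≤ t := fun s => hνuniv ▸ measure_mono (Set.subset_univ s)
  have hms : ∀ c : ℝ, MeasurableSet {x | g x ≤ c} := fun c => measurableSet_le hg measurable_const
  -- full-measure sublevel iff
  set T : Set ℝ := {c : ℝ | ν {x | g x ≤ c} = t} with hT
  -- T nonempty
  have hTne : T.Nonempty := by
    by_contra h
    have hall : ∀ n : ℕ, ν {x | g x ≤ (n : ℝ)} = 0 := by
      intro n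
      rcases hato _ (hms n) with h0 | h1
      · exact h0
      · exact absurd (⟨(n:ℝ), h1⟩ : T.Nonempty) h
    have : ν (⋃ n : ℕ, {x | g x ≤ (n : ℝ)}) = 0 := measure_iUnion_null hall
    have hcov : (⋃ n : ℕ, {x | g x ≤ (n : ℝ)}) = Set.univ := by
      ext x; simp only [Set.mem_iUnion, Set.mem_setOf_eq, Set.mem_univ, iff_true]
      exact exists_nat_ge (g x)
    rw [hcov, hνuniv] at this
    exact absurd this htpos.ne'
  -- T bounded below
  have hTbdd : BddBelow T := by
    have hex : ∃ n : ℕ, ν {x | -(n : ℝ) < g x} = t := by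
      by_contra h
      push_neg at h
      have hall : ∀ n : ℕ, ν {x | -(n : ℝ) < g x} = 0 := by
        intro n
        rcases hato _ (measurableSet_lt measurable_const hg) with h0 | h1
        · exact h0
        · exact absurd h1 (h n)
      have h0 : ν (⋃ n : ℕ, {x | -(n : ℝ) < g x}) = 0 := measure_iUnion_null hall
      have hcov : (⋃ n : ℕ, {x | -(n : ℝ) < g x}) = Set.univ := by
        ext x; simp only [Set.mem_iUnion, Set.mem_setOf_eq, Set.mem_univ, iff_true]
        obtain ⟨n, hn⟩ := exists_nat_gt (-(g x))
        exact ⟨n, by linarith⟩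
      rw [hcov, hνuniv] at h0
      exact absurd h0 htpos.ne'
    obtain ⟨n, hn⟩ := hex
    refine ⟨-(n : ℝ), fun c hc => ?_⟩
    by_contra hlt
    push_neg at hlt
    -- ν {g ≤ -n} = 0 since its complement has full measure
    have hcompl : {x | g x ≤ -(n:ℝ)} = {x | -(n:ℝ) < g x}ᶜ := by
      ext x; simp [not_lt]
    have h0 : ν {x | g x ≤ -(n:ℝ)} = 0 := by
      rw [hcompl, measure_compl (measurableSet_lt measurable_const hg) (lt_of_le_of_lt (hle _) hfin).ne,
        hνuniv, hn, tsub_self]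
    have hmono : ν {x | g x ≤ c} ≤ ν {x | g x ≤ -(n:ℝ)} :=
      measure_mono (fun x hx => le_trans hx hlt.le)
    rw [h0, nonpos_iff_eq_zero] at hmono
    rw [hT, Set.mem_setOf_eq, hmono] at hc
    exact htpos.ne hc
  set c₀ := sInf T with hc₀
  refine ⟨c₀, ?_⟩
  have hlt0 : ν {x | g x < c₀} = 0 := by
    have : {x | g x < c₀} ⊆ ⋃ k : ℕ, {x | g x ≤ c₀ - 1/(k+1)} := by
      intro x hx
      obtain ⟨k, hk⟩ := exists_nat_one_div_lt (show (0:ℝ) < _ - _ from sub_pos.mpr hx)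
      exact Set.mem_iUnion.mpr ⟨k, by simp only [Set.mem_setOf_eq]; push_cast at hk ⊢; linarith⟩
    refine measure_mono_null this (measure_iUnion_null fun k => ?_)
    rcases hato _ (hms _) with h0 | h1
    · exact h0
    · exfalso
      have hmem : c₀ - 1/(k+1) ∈ T := h1
      have := csInf_le hTbdd hmem
      have hkpos : (0:ℝ) < 1/(k+1) := by positivity
      rw [← hc₀] at this; linarith
  have hgt0 : ν {x | c₀ < g x} = 0 := by
    have hsub : {x | c₀ < g x} ⊆ ⋃ k : ℕ, {x | c₀ + 1/(k+1) ≤ g x} := by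
      intro x hx
      obtain ⟨k, hk⟩ := exists_nat_one_div_lt (show (0:ℝ) < _ - _ from sub_pos.mpr hx)
      exact Set.mem_iUnion.mpr ⟨k, by simp only [Set.mem_setOf_eq]; push_cast at hk ⊢; linarith⟩
    refine measure_mono_null hsub (measure_iUnion_null fun k => ?_)
    have hkpos : (0:ℝ) < 1/(k+1) := by positivity
    obtain ⟨c, hcT, hclt⟩ := exists_lt_of_csInf_lt hTne (show c₀ < c₀ + 1/(k+1) by linarith)
    have hfull : ν {x | g x ≤ c} = t := hcT
    have h0 : ν {x | g x ≤ c}ᶜ = 0 := by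
      rw [measure_compl (hms c) (lt_of_le_of_lt (hle _) hfin).ne, hνuniv, hfull, tsub_self]
    refine measure_mono_null (fun x hx => ?_) h0
    simp only [Set.mem_compl_iff, Set.mem_setOf_eq, not_le] at hx ⊢
    linarith
  have : ν {x | ¬ g x = c₀} = 0 := by
    refine measure_mono_null (fun x hx => ?_) (measure_union_null hlt0 hgt0)
    simp only [Set.mem_setOf_eq] at hx
    rcases lt_or_gt_of_ne hx with h | h
    · exact Or.inl h
    · exact Or.inr h
  exact this

lemma exists_small_subset {X : Type*} [MeasurableSpace X] {μ : Measure X} {S : Set X}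
    (hS : MeasurableSet S) (hpos : 0 < μ S) (hfin : μ S < ⊤)
    (hna : ∀ E : Set X, E ⊆ S → ¬ IsAtomSet μ E) {δ : ENNReal} (hδ : 0 < δ) :
    ∃ E : Set X, E ⊆ S ∧ MeasurableSet E ∧ 0 < μ E ∧ μ E < δ := by
  -- step: halve
  have step : ∀ E : Set X, E ⊆ S → MeasurableSet E → 0 < μ E →
      ∃ F : Set X, F ⊆ E ∧ MeasurableSet F ∧ 0 < μ F ∧ μ F ≤ μ E / 2 := by
    intro E hES hEm hEpos
    have hEfin : μ E < ⊤ := lt_of_le_of_lt (measure_mono hES) hfin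
    have hnot : ¬ IsAtomSet μ E := hna E hES
    simp only [IsAtomSet, not_and] at hnot
    have := hnot hEm hEpos
    push_neg at this
    obtain ⟨F, hFm, hFE, hF0, hFE'⟩ := this
    have hFpos : 0 < μ F := pos_iff_ne_zero.mpr hF0
    have hFlt : μ F < μ E := lt_of_le_of_ne (measure_mono hFE) hFE'
    have hdiff : μ (E \ F) = μ E - μ F := measure_diff hFE hFm.nullMeasurableSet
      (lt_of_le_of_lt (measure_mono hFE) hEfin).ne
    have hdiffpos : 0 < μ (E \ F) := by
      rw [hdiff]
      exact tsub_pos_of_lt hFlt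
    rcases le_or_gt (μ F) (μ E / 2) with h | h
    · exact ⟨F, hFE, hFm, hFpos, h⟩
    · refine ⟨E \ F, Set.diff_subset, hEm.diff hFm, hdiffpos, ?_⟩
      rw [hdiff]
      have h2 : μ E / 2 ≤ μ F := h.le
      calc μ E - μ F ≤ μ E - μ E / 2 := tsub_le_tsub_left h2 _
        _ = μ E / 2 := ENNReal.sub_half (lt_of_le_of_lt (le_refl _) hEfin).ne
  -- iterate
  have iter : ∀ n : ℕ, ∃ E : Set X, E ⊆ S ∧ MeasurableSet E ∧ 0 < μ E ∧ μ E ≤ μ S / 2 ^ n := by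
    intro n
    induction n with
    | zero => exact ⟨S, le_refl _, hS, hpos, by simp⟩
    | succ k ih =>
      obtain ⟨E, hES, hEm, hEpos, hEle⟩ := ih
      obtain ⟨F, hFE, hFm, hFpos, hFle⟩ := step E hES hEm hEpos
      refine ⟨F, hFE.trans hES, hFm, hFpos, hFle.trans ?_⟩
      rw [pow_succ]
      calc μ E / 2 ≤ μ S / 2 ^ k / 2 := ENNReal.div_le_div_right hEle 2
        _ = μ S / (2 ^ k * 2) := by
            rw [div_eq_mul_inv, div_eq_mul_inv, div_eq_mul_inv, mul_assoc,
              ENNReal.mul_inv (Or.inl (pow_ne_zero _ two_ne_zero)) (Or.inr two_ne_zero)]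
  -- choose n with μ S / 2 ^ n < δ
  obtain ⟨k, hk⟩ := ENNReal.exists_nat_gt hfin.ne
  have hk0 : (k : ENNReal) ≠ 0 := by
    intro h; rw [h] at hk; exact (not_lt_of_ge zero_le) (hk.trans_le (le_of_eq rfl)) |>.elim
  have hkt : (k : ENNReal) ≠ ⊤ := ENNReal.natCast_ne_top k
  have hδk : δ / k ≠ 0 := by
    rw [Ne, ENNReal.div_eq_zero_iff]
    push_neg
    exact ⟨hδ.ne', hkt⟩
  obtain ⟨n, hn⟩ := ENNReal.exists_inv_two_pow_lt hδk
  obtain ⟨E, hES, hEm, hEpos, hEle⟩ := iter n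
  refine ⟨E, hES, hEm, hEpos, lt_of_le_of_lt hEle ?_⟩
  have h1 : μ S / 2 ^ n ≤ (k : ENNReal) * 2⁻¹ ^ n := by
    rw [div_eq_mul_inv, ← ENNReal.inv_pow]
    exact mul_le_mul_left hk.le _
  refine lt_of_le_of_lt h1 ?_
  calc (k : ENNReal) * 2⁻¹ ^ n < k * (δ / k) :=
        (ENNReal.mul_lt_mul_iff_right hk0 hkt).mpr hn
    _ ≤ δ := ENNReal.mul_div_le

lemma tsum_rpow_le_rpow_tsum' (a : ℕ → ENNReal) {s : ℝ} (hs : 1 ≤ s) :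
    ∑' n, (a n) ^ s ≤ (∑' n, a n) ^ s := by
  set S := ∑' n, a n with hS
  have hs0 : 0 < s := lt_of_lt_of_le one_pos hs
  rcases eq_or_ne S ⊤ with h | h
  · rw [h, ENNReal.top_rpow_of_pos hs0]; exact le_top
  rcases eq_or_ne S 0 with h0 | h0
  · have : ∀ n, a n = 0 := fun n => by
      have := ENNReal.le_tsum (f := a) n
      rw [← hS, h0] at this
      simpa using this
    simp [this, ENNReal.zero_rpow_of_pos hs0]
  · have key : ∀ n, (a n) ^ s ≤ a n * S ^ (s - 1) := by
      intro n
      have h1 : a n ^ s = a n ^ (1:ℝ) * a n ^ (s - 1) := by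
        rw [← ENNReal.rpow_add_of_nonneg _ _ zero_le_one (by linarith)]
        norm_num
      rw [h1, ENNReal.rpow_one]
      exact mul_le_mul_right (ENNReal.rpow_le_rpow (ENNReal.le_tsum n) (by linarith)) _
    calc ∑' n, (a n) ^ s ≤ ∑' n, a n * S ^ (s - 1) := ENNReal.tsum_le_tsum key
      _ = S * S ^ (s - 1) := by rw [ENNReal.tsum_mul_right]
      _ = S ^ s := by
          have h2 : S * S ^ (s - 1) = S ^ (1:ℝ) * S ^ (s - 1) := by rw [ENNReal.rpow_one]
          rw [h2, ← ENNReal.rpow_add_of_nonneg _ _ zero_le_one (by linarith)]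
          norm_num

/-- boundedness of `M_u : L^p → L^q` for `1 < p < q < ∞`. -/
theorem multiplication_Lp_bounded_iff
    {X : Type*} [MeasurableSpace X] (μ : Measure X) [SigmaFinite μ]
    (A : ℕ → Set X) (B : Set X) (hdec : AtomicDecomposition μ A B)
    (p q r : ℝ) (hp : 1 < p) (hpq : p < q)
    (hr : 1 / r = 1 / p - 1 / q)
    (u : X → ℝ) (hum : Measurable u)
    (cu : ℕ → ℝ) (hcu : ∀ n, ∀ᵐ x ∂μ.restrict (A n), u x = cu n) :
    (∃ C : ℝ, 0 ≤ C ∧ ∀ f : X → ℝ, MemLp f (ENNReal.ofReal p) μ →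
        MemLp (fun x => u x * f x) (ENNReal.ofReal q) μ ∧
          eLpNorm (fun x => u x * f x) (ENNReal.ofReal q) μ ≤
            ENNReal.ofReal C * eLpNorm f (ENNReal.ofReal p) μ) ↔
      ((∀ᵐ x ∂μ.restrict B, u x = 0) ∧
        ∃ M : ℝ, ∀ n, |cu n| ^ r ≤ M * (μ (A n)).toReal) := by
  obtain ⟨hatom, hAfin, hdisj, hAB, hBm, hBna, hcover⟩ := hdec
  have hAm : ∀ n, MeasurableSet (A n) := fun n => (hatom n).1
  have hp0 : (0:ℝ) < p := by linarith
  have hq0 : (0:ℝ) < q := by linarith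
  have h1r : (0:ℝ) < 1 / r := by
    rw [hr]
    have := one_div_lt_one_div_of_lt hp0 hpq
    linarith
  have hr0 : (0:ℝ) < r := by
    by_contra h
    push_neg at h
    have : 1 / r ≤ 0 := by
      rcases eq_or_lt_of_le h with h' | h'
      · simp [h']
      · exact le_of_lt (div_neg_of_pos_of_neg one_pos h')
    linarith
  set P := ENNReal.ofReal p with hPdef
  set Q := ENNReal.ofReal q with hQdef
  have hP0 : P ≠ 0 := by simp [hPdef, ENNReal.ofReal_eq_zero]; linarith
  have hPt : P ≠ ⊤ := ENNReal.ofReal_ne_top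
  have hQ0 : Q ≠ 0 := by simp [hQdef, ENNReal.ofReal_eq_zero]; linarith
  have hQt : Q ≠ ⊤ := ENNReal.ofReal_ne_top
  have hPr : P.toReal = p := ENNReal.toReal_ofReal hp0.le
  have hQr : Q.toReal = q := ENNReal.toReal_ofReal hq0.le
  have hBc : Bᶜ = ⋃ n, A n := by
    ext x
    constructor
    · intro hx
      have : x ∈ (⋃ n, A n) ∪ B := hcover ▸ Set.mem_univ x
      rcases this with h | h
      · exact h
      · exact absurd h hx
    · intro hx hxB
      obtain ⟨n, hn⟩ := Set.mem_iUnion.mp hx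
      exact (hAB n).ne_of_mem hn hxB rfl
  have hμA : ∀ n, 0 < μ (A n) := fun n => (hatom n).2.1
  have hτA : ∀ n, 0 < (μ (A n)).toReal := fun n =>
    ENNReal.toReal_pos (hμA n).ne' (hAfin n).ne
  constructor
  · rintro ⟨C, hC0, hCb⟩
    constructor
    · -- u = 0 a.e. on B
      by_contra hcontra
      rw [ae_iff] at hcontra
      have hsub : {x | ¬ u x = 0} ⊆ ⋃ k : ℕ, {x | 1/((k:ℝ)+1) ≤ |u x|} := by
        intro x hx
        have : (0:ℝ) < |u x| := abs_pos.mpr hx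
        obtain ⟨k, hk⟩ := exists_nat_one_div_lt this
        exact Set.mem_iUnion.mpr ⟨k, le_of_lt hk⟩
      have hex : ∃ k : ℕ, μ.restrict B {x | 1/((k:ℝ)+1) ≤ |u x|} ≠ 0 := by
        by_contra h
        push_neg at h
        exact hcontra (measure_mono_null hsub (measure_iUnion_null h))
      obtain ⟨k, hk⟩ := hex
      set ε : ℝ := 1/((k:ℝ)+1) with hε
      have hεpos : 0 < ε := by positivity
      have hmeasE : MeasurableSet {x | ε ≤ |u x|} :=
        measurableSet_le measurable_const hum.abs
      set S₀ := {x | ε ≤ |u x|} ∩ B with hS₀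
      have hS₀pos : 0 < μ S₀ := by
        rw [hS₀, ← Measure.restrict_apply hmeasE]
        exact pos_iff_ne_zero.mpr hk
      have hS₀m : MeasurableSet S₀ := hmeasE.inter hBm
      have hexm : ∃ m : ℕ, μ (S₀ ∩ spanningSets μ m) ≠ 0 := by
        by_contra h
        push_neg at h
        have : μ S₀ = 0 := by
          have hcov : S₀ = ⋃ m, S₀ ∩ spanningSets μ m := by
            rw [← Set.inter_iUnion, iUnion_spanningSets, Set.inter_univ]
          rw [hcov]
          exact measure_iUnion_null h
        exact hS₀pos.ne' this
      obtain ⟨m, hm⟩ := hexm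
      set S := S₀ ∩ spanningSets μ m with hSdef
      have hSm : MeasurableSet S := hS₀m.inter (measurableSet_spanningSets μ m)
      have hSpos : 0 < μ S := pos_iff_ne_zero.mpr hm
      have hSfin : μ S < ⊤ :=
        lt_of_le_of_lt (measure_mono Set.inter_subset_right) (measure_spanningSets_lt_top μ m)
      have hSB : S ⊆ B := fun x hx => hx.1.2
      have hna' : ∀ E : Set X, E ⊆ S → ¬ IsAtomSet μ E := fun E hE => hBna E (hE.trans hSB)
      have hδpos : (0:ENNReal) < ENNReal.ofReal ((ε/(C+1))^r) := by
        rw [ENNReal.ofReal_pos]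
        exact Real.rpow_pos_of_pos (div_pos hεpos (by linarith)) r
      obtain ⟨E, hES, hEm, hEpos, hEδ⟩ := exists_small_subset hSm hSpos hSfin hna' hδpos
      have hEfin : μ E < ⊤ := lt_of_lt_of_le hEδ le_top
      set f : X → ℝ := E.indicator (fun _ => (1:ℝ)) with hfdef
      have hfmem : MemLp f P μ := memLp_indicator_const P hEm 1 (Or.inr hEfin.ne)
      obtain ⟨_, hineq⟩ := hCb f hfmem
      have hmono : eLpNorm (E.indicator fun _ => ε) Q μ ≤ eLpNorm (fun x => u x * f x) Q μ := by
        apply eLpNorm_mono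
        intro x
        by_cases hx : x ∈ E
        · have hεu : ε ≤ |u x| := (hES hx).1.1
          simp only [hfdef, Set.indicator_of_mem hx, Real.norm_eq_abs, abs_mul, abs_one, mul_one]
          rwa [abs_of_pos hεpos]
        · simp [hfdef, Set.indicator_of_notMem hx]
      rw [eLpNorm_indicator_const hEm hQ0 hQt, hQr] at hmono
      have hineq2 : (‖ε‖₊ : ENNReal) * μ E ^ (1/q) ≤ ENNReal.ofReal C * eLpNorm f P μ :=
        hmono.trans hineq
      rw [hfdef, eLpNorm_indicator_const hEm hP0 hPt, hPr] at hineq2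
      simp only [enorm_one, nnnorm_one, ENNReal.coe_one, one_mul] at hineq2
      set τ := (μ E).toReal with hτdef
      have hτpos : 0 < τ := ENNReal.toReal_pos hEpos.ne' hEfin.ne
      have hRHSne : ENNReal.ofReal C * ((1:ENNReal) * μ E ^ (1/p)) ≠ ⊤ :=
        ENNReal.mul_ne_top ENNReal.ofReal_ne_top
          (by
            rw [one_mul]
            exact ENNReal.rpow_ne_top_of_nonneg (by positivity) hEfin.ne)
      have hreal : ε * τ ^ (1/q) ≤ C * τ ^ (1/p) := by
        have h2 := ENNReal.toReal_mono (by simpa using hRHSne) hineq2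
        simpa [ENNReal.toReal_mul, ← ENNReal.toReal_rpow, ENNReal.coe_toReal,
          coe_nnnorm, Real.norm_eq_abs, abs_of_pos hεpos,
          ENNReal.toReal_ofReal hC0, ← hτdef] using h2
      have hsplit : τ ^ (1/p) = τ ^ (1/r) * τ ^ (1/q) := by
        rw [← Real.rpow_add hτpos]
        congr 1
        rw [hr]; ring
      have hle : ε ≤ C * τ ^ (1/r) := by
        have hq' : (0:ℝ) < τ ^ (1/q) := Real.rpow_pos_of_pos hτpos _
        rw [hsplit, ← mul_assoc] at hreal
        exact le_of_mul_le_mul_right hreal hq'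
      have hrnn : (0:ℝ) ≤ τ ^ (1/r) := Real.rpow_nonneg hτpos.le _
      have hle2 : ε ≤ (C+1) * τ ^ (1/r) := le_trans hle (by nlinarith)
      have hτlt : τ < (ε/(C+1)) ^ r :=
        (ENNReal.lt_ofReal_iff_toReal_lt hEfin.ne).mp hEδ
      have hfrac : (0:ℝ) < ε/(C+1) := div_pos hεpos (by linarith)
      have hlt2 : τ ^ (1/r) < ε/(C+1) := by
        have h3 : τ ^ (1/r) < ((ε/(C+1)) ^ r) ^ (1/r) :=
          Real.rpow_lt_rpow hτpos.le hτlt h1r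
        rwa [← Real.rpow_mul hfrac.le, mul_one_div_cancel hr0.ne', Real.rpow_one] at h3
      have heq : (C+1) * (ε/(C+1)) = ε := by field_simp
      have : ε < ε := by
        calc ε ≤ (C+1) * τ ^ (1/r) := hle2
          _ < (C+1) * (ε/(C+1)) := by
              apply mul_lt_mul_of_pos_left hlt2 (by linarith)
          _ = ε := heq
      exact lt_irrefl _ this
    · -- the constants bound
      refine ⟨C ^ r, fun n => ?_⟩
      set f : X → ℝ := (A n).indicator (fun _ => (1:ℝ)) with hfdef
      have hfmem : MemLp f P μ := memLp_indicator_const P (hAm n) 1 (Or.inr (hAfin n).ne)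
      obtain ⟨_, hineq⟩ := hCb f hfmem
      have huf : (fun x => u x * f x) =ᵐ[μ] (A n).indicator (fun _ => cu n) := by
        have h1 : ∀ᵐ x ∂μ, x ∈ A n → u x = cu n := (ae_restrict_iff' (hAm n)).mp (hcu n)
        filter_upwards [h1] with x hx
        by_cases hmem : x ∈ A n
        · simp [hfdef, Set.indicator_of_mem hmem, hx hmem]
        · simp [hfdef, Set.indicator_of_notMem hmem]
      rw [eLpNorm_congr_ae huf, eLpNorm_indicator_const (hAm n) hQ0 hQt] at hineq
      rw [hfdef, eLpNorm_indicator_const (hAm n) hP0 hPt] at hineq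
      simp only [enorm_one, nnnorm_one, ENNReal.coe_one, one_mul, hPr, hQr] at hineq
      set τ := (μ (A n)).toReal with hτdef
      have hτpos : 0 < τ := hτA n
      have hRHSne : ENNReal.ofReal C * μ (A n) ^ (1/p) ≠ ⊤ :=
        ENNReal.mul_ne_top ENNReal.ofReal_ne_top
          (ENNReal.rpow_ne_top_of_nonneg (by positivity) (hAfin n).ne)
      have hreal : |cu n| * τ ^ (1/q) ≤ C * τ ^ (1/p) := by
        have := ENNReal.toReal_mono hRHSne hineq
        simpa [ENNReal.toReal_mul, ← ENNReal.toReal_rpow, ENNReal.coe_toReal,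
          coe_nnnorm, Real.norm_eq_abs, ENNReal.toReal_ofReal hC0, ← hτdef] using this
      have hsplit : τ ^ (1/p) = τ ^ (1/r) * τ ^ (1/q) := by
        rw [← Real.rpow_add hτpos]
        congr 1
        rw [hr]; ring
      have hcu_le : |cu n| ≤ C * τ ^ (1/r) := by
        have hq' : (0:ℝ) < τ ^ (1/q) := Real.rpow_pos_of_pos hτpos _
        rw [hsplit, ← mul_assoc] at hreal
        exact le_of_mul_le_mul_right hreal hq'
      calc |cu n| ^ r ≤ (C * τ ^ (1/r)) ^ r :=
            Real.rpow_le_rpow (abs_nonneg _) hcu_le hr0.le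
        _ = C ^ r * (τ ^ (1/r)) ^ r := Real.mul_rpow hC0 (Real.rpow_nonneg hτpos.le _)
        _ = C ^ r * τ := by
            rw [← Real.rpow_mul hτpos.le, one_div_mul_cancel hr0.ne', Real.rpow_one]
  · rintro ⟨hB0, M, hM⟩
    have hM0 : 0 ≤ M := by
      have h0 := hM 0
      have h1 : (0:ℝ) ≤ |cu 0| ^ r := Real.rpow_nonneg (abs_nonneg _) r
      nlinarith [hτA 0]
    refine ⟨M ^ (1/r), Real.rpow_nonneg hM0 _, fun f hf => ?_⟩
    have hfm := hf.aestronglyMeasurable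
    set g := hfm.mk f with hgdef
    have hgm : Measurable g := hfm.stronglyMeasurable_mk.measurable
    have hfg : f =ᵐ[μ] g := hfm.ae_eq_mk
    have hd : ∀ n, ∃ dd : ℝ, ∀ᵐ x ∂μ.restrict (A n), g x = dd := fun n =>
      exists_ae_const_of_isAtom (hatom n) (hAfin n) hgm
    choose d hdn using hd
    have hufm : AEStronglyMeasurable (fun x => u x * f x) μ :=
      hum.aestronglyMeasurable.mul hfm
    set I := ∫⁻ x, (‖u x * f x‖₊ : ENNReal) ^ q ∂μ with hI
    set J := ∫⁻ x, (‖f x‖₊ : ENNReal) ^ p ∂μ with hJ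
    have heLp_f : eLpNorm f P μ = J ^ (1/p) := by
      rw [eLpNorm_eq_lintegral_rpow_enorm_toReal hP0 hPt, hPr]; rfl
    have heLp_uf : eLpNorm (fun x => u x * f x) Q μ = I ^ (1/q) := by
      rw [eLpNorm_eq_lintegral_rpow_enorm_toReal hQ0 hQt, hQr]; rfl
    have hBzero : ∫⁻ x in B, (‖u x * f x‖₊ : ENNReal) ^ q ∂μ = 0 := by
      have h0 : ∀ᵐ x ∂μ.restrict B, (‖u x * f x‖₊ : ENNReal) ^ q = 0 := by
        filter_upwards [hB0] with x hx
        simp [hx, ENNReal.zero_rpow_of_pos hq0]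
      rw [lintegral_congr_ae h0, lintegral_zero]
    have hAn_uf : ∀ n, ∫⁻ x in A n, (‖u x * f x‖₊ : ENNReal) ^ q ∂μ
        = ENNReal.ofReal (|cu n * d n| ^ q) * μ (A n) := by
      intro n
      have hae : ∀ᵐ x ∂μ.restrict (A n),
          (‖u x * f x‖₊ : ENNReal) ^ q = ENNReal.ofReal (|cu n * d n| ^ q) := by
        filter_upwards [hcu n, hdn n, ae_restrict_of_ae hfg] with x h1 h2 h3
        rw [h3, h2, h1, ← enorm_eq_nnnorm, ← ofReal_norm, Real.norm_eq_abs,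
          ENNReal.ofReal_rpow_of_nonneg (abs_nonneg _) hq0.le]
      rw [lintegral_congr_ae hae, lintegral_const, Measure.restrict_apply_univ]
    have hAn_f : ∀ n, ∫⁻ x in A n, (‖f x‖₊ : ENNReal) ^ p ∂μ
        = ENNReal.ofReal (|d n| ^ p) * μ (A n) := by
      intro n
      have hae : ∀ᵐ x ∂μ.restrict (A n),
          (‖f x‖₊ : ENNReal) ^ p = ENNReal.ofReal (|d n| ^ p) := by
        filter_upwards [hdn n, ae_restrict_of_ae hfg] with x h2 h3
        rw [h3, h2, ← enorm_eq_nnnorm, ← ofReal_norm, Real.norm_eq_abs,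
          ENNReal.ofReal_rpow_of_nonneg (abs_nonneg _) hp0.le]
      rw [lintegral_congr_ae hae, lintegral_const, Measure.restrict_apply_univ]
    have hIsum : I = ∑' n, ENNReal.ofReal (|cu n * d n| ^ q) * μ (A n) := by
      rw [hI, ← lintegral_add_compl (fun x => ((‖u x * f x‖₊ : ENNReal)) ^ q) hBm, hBzero,
        zero_add, hBc, lintegral_iUnion hAm hdisj]
      exact tsum_congr hAn_uf
    have hJsum : ∑' n, ENNReal.ofReal (|d n| ^ p) * μ (A n) ≤ J := by
      calc ∑' n, ENNReal.ofReal (|d n| ^ p) * μ (A n)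
          = ∫⁻ x in ⋃ n, A n, (‖f x‖₊ : ENNReal) ^ p ∂μ := by
            rw [lintegral_iUnion hAm hdisj]
            exact (tsum_congr hAn_f).symm
        _ ≤ J := by
            rw [hJ]
            exact lintegral_mono' Measure.restrict_le_self le_rfl
    have hqr : q/r + 1 = q/p := by
      have h1 : q * (1/r) = q * (1/p) - q * (1/q) := by rw [hr]; ring
      have h2 : q * (1/q) = 1 := mul_one_div_cancel hq0.ne'
      have h3 : q/r = q/p - 1 := by
        rw [div_eq_mul_one_div q r, div_eq_mul_one_div q p, h1, h2]
      linarith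
    have hterm : ∀ n, ENNReal.ofReal (|cu n * d n| ^ q) * μ (A n)
        ≤ ENNReal.ofReal M ^ (q/r) * (ENNReal.ofReal (|d n| ^ p) * μ (A n)) ^ (q/p) := by
      intro n
      have hτpos : 0 < (μ (A n)).toReal := hτA n
      set τ := (μ (A n)).toReal with hτdef
      have hμtow : μ (A n) = ENNReal.ofReal τ := (ENNReal.ofReal_toReal (hAfin n).ne).symm
      rw [hμtow, ← ENNReal.ofReal_mul (show (0:ℝ) ≤ |cu n * d n| ^ q by positivity),
        ← ENNReal.ofReal_mul (show (0:ℝ) ≤ |d n| ^ p by positivity),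
        ENNReal.ofReal_rpow_of_nonneg hM0 (by positivity),
        ENNReal.ofReal_rpow_of_nonneg (show (0:ℝ) ≤ |d n| ^ p * τ by positivity) (by positivity),
        ← ENNReal.ofReal_mul (by positivity)]
      apply ENNReal.ofReal_le_ofReal
      have hcuq : |cu n| ^ q ≤ M ^ (q/r) * τ ^ (q/r) := by
        have h1 : (|cu n| ^ r) ^ (q/r) ≤ (M * τ) ^ (q/r) :=
          Real.rpow_le_rpow (Real.rpow_nonneg (abs_nonneg _) _) (hM n) (by positivity)
        rwa [← Real.rpow_mul (abs_nonneg _), mul_div_cancel₀ q hr0.ne',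
          Real.mul_rpow hM0 hτpos.le] at h1
      have hdq : (|d n| ^ p) ^ (q/p) = |d n| ^ q := by
        rw [← Real.rpow_mul (abs_nonneg _), mul_div_cancel₀ q hp0.ne']
      calc |cu n * d n| ^ q * τ = |cu n| ^ q * (|d n| ^ q * τ) := by
            rw [abs_mul, Real.mul_rpow (abs_nonneg _) (abs_nonneg _)]; ring
        _ ≤ (M ^ (q/r) * τ ^ (q/r)) * (|d n| ^ q * τ) := by
            apply mul_le_mul_of_nonneg_right hcuq
            positivity
        _ = M ^ (q/r) * (|d n| ^ q * (τ ^ (q/r) * τ)) := by ring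
        _ = M ^ (q/r) * (|d n| ^ q * τ ^ (q/p)) := by
            rw [show τ ^ (q/r) * τ = τ ^ (q/r + 1) by
              rw [Real.rpow_add hτpos, Real.rpow_one], hqr]
        _ = M ^ (q/r) * (|d n| ^ p * τ) ^ (q/p) := by
            rw [Real.mul_rpow (Real.rpow_nonneg (abs_nonneg _) _) hτpos.le, hdq]
    have hqp1 : (1:ℝ) ≤ q/p := (one_le_div hp0).mpr hpq.le
    have hIle : I ≤ ENNReal.ofReal M ^ (q/r) * J ^ (q/p) := by
      rw [hIsum]
      calc ∑' n, ENNReal.ofReal (|cu n * d n| ^ q) * μ (A n)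
          ≤ ∑' n, ENNReal.ofReal M ^ (q/r) * (ENNReal.ofReal (|d n| ^ p) * μ (A n)) ^ (q/p) :=
            ENNReal.tsum_le_tsum hterm
        _ = ENNReal.ofReal M ^ (q/r) *
            ∑' n, (ENNReal.ofReal (|d n| ^ p) * μ (A n)) ^ (q/p) := ENNReal.tsum_mul_left
        _ ≤ ENNReal.ofReal M ^ (q/r) *
            (∑' n, ENNReal.ofReal (|d n| ^ p) * μ (A n)) ^ (q/p) :=
            mul_le_mul_right (tsum_rpow_le_rpow_tsum' _ hqp1) _
        _ ≤ ENNReal.ofReal M ^ (q/r) * J ^ (q/p) :=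
            mul_le_mul_right (ENNReal.rpow_le_rpow hJsum (by positivity)) _
    have he1 : q/r * (1/q) = 1/r := by
      rw [mul_one_div, div_div, mul_comm r q, ← div_div, div_self hq0.ne']
    have he2 : q/p * (1/q) = 1/p := by
      rw [mul_one_div, div_div, mul_comm p q, ← div_div, div_self hq0.ne']
    have hfinal : eLpNorm (fun x => u x * f x) Q μ
        ≤ ENNReal.ofReal (M ^ (1/r)) * eLpNorm f P μ := by
      rw [heLp_uf, heLp_f, ← ENNReal.ofReal_rpow_of_nonneg hM0 h1r.le]
      calc I ^ (1/q) ≤ (ENNReal.ofReal M ^ (q/r) * J ^ (q/p)) ^ (1/q) :=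
            ENNReal.rpow_le_rpow hIle (by positivity)
        _ = (ENNReal.ofReal M ^ (q/r)) ^ (1/q) * (J ^ (q/p)) ^ (1/q) :=
            ENNReal.mul_rpow_of_nonneg _ _ (by positivity)
        _ = ENNReal.ofReal M ^ (1/r) * J ^ (1/p) := by
            rw [← ENNReal.rpow_mul, ← ENNReal.rpow_mul, he1, he2]
    refine ⟨⟨hufm, ?_⟩, hfinal⟩
    calc eLpNorm (fun x => u x * f x) Q μ
        ≤ ENNReal.ofReal (M ^ (1/r)) * eLpNorm f P μ := hfinal
      _ < ⊤ := ENNReal.mul_lt_top ENNReal.ofReal_lt_top hf.2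
end

section
/- Let 1 < q < p < ∞ and let T be a non-singular measurable transformation with Radon–Nikodym derivative f₀ = d(μ∘T⁻¹)/dμ, inducing C_T: L^p(Σ) → L^q(Σ). Then C_T is bounded from L^p into L^q if and only if f₀ ∈ L^{r/q}(Σ), where 1/r = 1/q − 1/p; moreover this is equivalent to the existence of a countable measurable partition {Fⱼ} of X with Σⱼ Q_T(Fⱼ)^{r/q} μ(Fⱼ) < ∞, where Q_T(F) = ess sup_{x∈F} f₀(x). -/
open MeasureTheory Filter Topology ENNReal

variable {X : Type*} [MeasurableSpace X]

/-- `Q_T(F) = ess sup_{x ∈ F} f₀(x)` (as an extended nonnegative real). -/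
noncomputable def QTess {X : Type*} [MeasurableSpace X] (μ : Measure X)
    (f₀ : X → ℝ) (F : Set X) : ℝ≥0∞ :=
  essSup (fun x => ENNReal.ofReal (f₀ x)) (μ.restrict F)

/-- boundedness of `C_T : L^p → L^q` for `1 < q < p < ∞`:
equivalent to `f₀ ∈ L^{r/q}` and to a partition summability condition. -/
theorem composition_Lp_bounded_iff
    {X : Type*} [MeasurableSpace X] (μ : Measure X) [SigmaFinite μ]
    (p q r : ℝ) (hq : 1 < q) (hqp : q < p)
    (hr : 1 / r = 1 / q - 1 / p)
    (T : X → X) (hT : Measurable T) (hns : μ.map T ≪ μ)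
    (f₀ : X → ℝ) (hf₀m : Measurable f₀) (hf₀nn : ∀ x, 0 ≤ f₀ x)
    (hf₀ : ∀ S : Set X, MeasurableSet S →
      μ.map T S = ∫⁻ x in S, ENNReal.ofReal (f₀ x) ∂μ) :
    ((∃ C : ℝ, 0 ≤ C ∧ ∀ f : X → ℝ, MemLp f (ENNReal.ofReal p) μ →
        MemLp (fun x => f (T x)) (ENNReal.ofReal q) μ ∧
          eLpNorm (fun x => f (T x)) (ENNReal.ofReal q) μ ≤
            ENNReal.ofReal C * eLpNorm f (ENNReal.ofReal p) μ) ↔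
      MemLp f₀ (ENNReal.ofReal (r / q)) μ) ∧
    (MemLp f₀ (ENNReal.ofReal (r / q)) μ ↔
      ∃ F : ℕ → Set X, (∀ j, MeasurableSet (F j)) ∧
        Pairwise (Function.onFun Disjoint F) ∧ (⋃ j, F j) = Set.univ ∧
        ∑' j, QTess μ f₀ (F j) ^ (r / q) * μ (F j) < ⊤) := by
  
  classical
  -- basic positivity facts
  have hq0 : 0 < q := zero_lt_one.trans hq
  have hp0 : 0 < p := hq0.trans hqp
  have hr0 : 0 < r := by
    have h1 : 0 < 1 / r := by
      rw [hr]; have := one_div_lt_one_div_of_lt hq0 hqp; linarith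
    exact one_div_pos.mp h1
  set s := r / q with hs_def
  set t := p / q with ht_def
  have hs0 : 0 < s := div_pos hr0 hq0
  have ht0 : 0 < t := div_pos hp0 hq0
  have hrv : r * (p - q) = p * q := by
    field_simp at hr; nlinarith [hr]
  have hs1 : 1 < s := by
    rw [hs_def, lt_div_iff₀ hq0, one_mul]
    nlinarith [sq_nonneg q, hrv]
  have hconj : s.HolderConjugate t := by
    rw [Real.holderConjugate_iff]
    constructor
    · exact hs1
    · rw [hs_def, ht_def]; field_simp; nlinarith [hrv]
  have hqt : q * t = p := by rw [ht_def]; field_simp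
  have hst1 : (s - 1) * t = s := by
    rw [hs_def, ht_def]; field_simp; nlinarith [hrv]
  have h1s1q : (1/s) * (1/q) = 1/r := by rw [hs_def]; field_simp
  have h1t1q : (1/t) * (1/q) = 1/p := by rw [ht_def]; field_simp
  have hqrp : 1/q = 1/r + 1/p := by rw [hr]; ring
  -- the density
  set e : X → ℝ≥0∞ := fun x => ENNReal.ofReal (f₀ x) with he_def
  have hem : Measurable e := hf₀m.ennreal_ofReal
  have hefin : ∀ x, e x ≠ ⊤ := fun x => ENNReal.ofReal_ne_top
  have hmap : μ.map T = μ.withDensity e := by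
    ext S hS
    rw [hf₀ S hS, withDensity_apply _ hS]
  have cov : ∀ g : X → ℝ≥0∞, Measurable g →
      ∫⁻ x, g (T x) ∂μ = ∫⁻ x, e x * g x ∂μ := by
    intro g hg
    rw [← lintegral_map hg hT, hmap, lintegral_withDensity_eq_lintegral_mul μ hem hg]
    rfl
  -- a helper to kill rpow/top issues
  have hrpow_top : ∀ (a : ℝ) (J : ℝ≥0∞), 0 < a → J ^ a < ⊤ → J < ⊤ := by
    intro a J ha hJ
    by_contra h
    rw [not_lt, top_le_iff] at h
    rw [h, ENNReal.top_rpow_of_pos ha] at hJ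
    exact absurd hJ (lt_irrefl _)
  -- eLpNorm with real exponent
  have hnorm : ∀ (a : ℝ), 0 < a → ∀ f : X → ℝ,
      eLpNorm f (ENNReal.ofReal a) μ
        = (∫⁻ x, (‖f x‖₊ : ℝ≥0∞) ^ a ∂μ) ^ (1/a) := by
    intro a ha f
    rw [eLpNorm_eq_lintegral_rpow_enorm_toReal
      (by simp [ENNReal.ofReal_eq_zero, not_le, ha]) ENNReal.ofReal_ne_top,
      ENNReal.toReal_ofReal ha.le]
    rfl
  set I : ℝ≥0∞ := ∫⁻ x, e x ^ s ∂μ with hI_def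
  have hI_norm : eLpNorm f₀ (ENNReal.ofReal s) μ = I ^ (1/s) := by
    rw [hnorm s hs0 f₀]
    congr 1
    apply lintegral_congr
    intro x
    rw [← enorm_eq_nnnorm, Real.enorm_eq_ofReal (hf₀nn x)]
  have hmem_iff : MemLp f₀ (ENNReal.ofReal s) μ ↔ I < ⊤ := by
    constructor
    · intro h
      have h2 := h.eLpNorm_lt_top
      rw [hI_norm] at h2
      exact hrpow_top _ _ (by positivity) h2
    · intro h
      exact ⟨hf₀m.aestronglyMeasurable, by
        rw [hI_norm]
        exact ENNReal.rpow_lt_top_of_nonneg (by positivity) h.ne⟩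
  -- Part A : I < ⊤ → bounded
  have partA : I < ⊤ → (∃ C : ℝ, 0 ≤ C ∧ ∀ f : X → ℝ, MemLp f (ENNReal.ofReal p) μ →
        MemLp (fun x => f (T x)) (ENNReal.ofReal q) μ ∧
          eLpNorm (fun x => f (T x)) (ENNReal.ofReal q) μ ≤
            ENNReal.ofReal C * eLpNorm f (ENNReal.ofReal p) μ) := by
    intro hI
    have hIr_ne : I ^ (1/r) ≠ ⊤ := (ENNReal.rpow_lt_top_of_nonneg (by positivity) hI.ne).ne
    refine ⟨(I ^ (1/r)).toReal, ENNReal.toReal_nonneg, ?_⟩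
    have hCof : ENNReal.ofReal ((I ^ (1/r)).toReal) = I ^ (1/r) := ENNReal.ofReal_toReal hIr_ne
    intro f hf
    set f' : X → ℝ := (hf.1.mk f) with hf'_def
    have hf'sm := hf.1.stronglyMeasurable_mk
    have hff' : f =ᵐ[μ] f' := hf.1.ae_eq_mk
    have hcomp : (fun x => f (T x)) =ᵐ[μ] fun x => f' (T x) :=
      ae_of_ae_map hT.aemeasurable (hff'.filter_mono hns.ae_le)
    have hasm : AEStronglyMeasurable (fun x => f (T x)) μ :=
      ⟨fun x => f' (T x), hf'sm.comp_measurable hT, hcomp⟩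
    have hg : Measurable fun x => (‖f' x‖₊ : ℝ≥0∞) ^ q :=
      (ENNReal.continuous_rpow_const.measurable).comp
        (hf'sm.measurable.nnnorm.coe_nnreal_ennreal)
    have key : ∫⁻ x, (‖f (T x)‖₊ : ℝ≥0∞) ^ q ∂μ
        ≤ I ^ (1/s) * (∫⁻ x, (‖f x‖₊ : ℝ≥0∞) ^ p ∂μ) ^ (1/t) := by
      have h1 : ∫⁻ x, (‖f (T x)‖₊ : ℝ≥0∞) ^ q ∂μ
          = ∫⁻ x, (‖f' (T x)‖₊ : ℝ≥0∞) ^ q ∂μ :=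
        lintegral_congr_ae (hcomp.mono fun x hx => by dsimp only at hx ⊢; rw [hx])
      rw [h1, cov _ hg]
      calc ∫⁻ x, e x * (‖f' x‖₊ : ℝ≥0∞) ^ q ∂μ
          ≤ (∫⁻ x, e x ^ s ∂μ) ^ (1/s)
            * (∫⁻ x, ((‖f' x‖₊ : ℝ≥0∞) ^ q) ^ t ∂μ) ^ (1/t) :=
            ENNReal.lintegral_mul_le_Lp_mul_Lq μ hconj hem.aemeasurable hg.aemeasurable
        _ = I ^ (1/s) * (∫⁻ x, (‖f x‖₊ : ℝ≥0∞) ^ p ∂μ) ^ (1/t) := by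
            congr 2
            apply lintegral_congr_ae
            filter_upwards [hff'] with x hx
            rw [← ENNReal.rpow_mul, hqt, hx]
    have hfp_fin : ∫⁻ x, (‖f x‖₊ : ℝ≥0∞) ^ p ∂μ < ⊤ := by
      have h2 := hf.eLpNorm_lt_top
      rw [hnorm p hp0] at h2
      exact hrpow_top _ _ (by positivity) h2
    constructor
    · refine ⟨hasm, ?_⟩
      rw [hnorm q hq0]
      refine ENNReal.rpow_lt_top_of_nonneg (by positivity) (ne_of_lt (lt_of_le_of_lt key ?_))
      exact ENNReal.mul_lt_top (ENNReal.rpow_lt_top_of_nonneg (by positivity) hI.ne)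
        (ENNReal.rpow_lt_top_of_nonneg (by positivity) hfp_fin.ne)
    · rw [hnorm q hq0, hnorm p hp0, hCof]
      calc (∫⁻ x, (‖f (T x)‖₊ : ℝ≥0∞) ^ q ∂μ) ^ (1/q)
          ≤ (I ^ (1/s) * (∫⁻ x, (‖f x‖₊ : ℝ≥0∞) ^ p ∂μ) ^ (1/t)) ^ (1/q) :=
            ENNReal.rpow_le_rpow key (by positivity)
        _ = I ^ (1/r) * (∫⁻ x, (‖f x‖₊ : ℝ≥0∞) ^ p ∂μ) ^ (1/p) := by
            rw [ENNReal.mul_rpow_of_nonneg _ _ (by positivity),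
              ← ENNReal.rpow_mul, ← ENNReal.rpow_mul, h1s1q, h1t1q]
  -- Part B : bounded → I < ⊤
  have partB : (∃ C : ℝ, 0 ≤ C ∧ ∀ f : X → ℝ, MemLp f (ENNReal.ofReal p) μ →
        MemLp (fun x => f (T x)) (ENNReal.ofReal q) μ ∧
          eLpNorm (fun x => f (T x)) (ENNReal.ofReal q) μ ≤
            ENNReal.ofReal C * eLpNorm f (ENNReal.ofReal p) μ) → I < ⊤ := by
    rintro ⟨C, hC0, hC⟩
    set g : ℕ → X → ℝ≥0∞ :=
      fun n x => (spanningSets μ n).indicator (fun y => min (e y) (n : ℝ≥0∞)) x with hg_def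
    have hgm : ∀ n, Measurable (g n) :=
      fun n => (hem.min measurable_const).indicator (measurableSet_spanningSets μ n)
    have hgle : ∀ n x, g n x ≤ e x := by
      intro n x
      by_cases hx : x ∈ spanningSets μ n
      · rw [hg_def]; simp only [Set.indicator_of_mem hx]; exact min_le_left _ _
      · rw [hg_def]; simp only [Set.indicator_of_notMem hx]; exact zero_le
    have hgfin : ∀ n x, g n x ≠ ⊤ := fun n x => (lt_of_le_of_lt (hgle n x)
      (lt_of_le_of_ne le_top (hefin x))).ne
    have hgmono : Monotone g := by
      intro m n hmn x
      by_cases hx : x ∈ spanningSets μ m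
      · rw [hg_def]
        simp only [Set.indicator_of_mem hx,
          Set.indicator_of_mem (monotone_spanningSets μ hmn hx)]
        exact min_le_min le_rfl (by exact_mod_cast Nat.cast_le.mpr hmn)
      · rw [hg_def]; simp only [Set.indicator_of_notMem hx]; exact zero_le
    have hgsup : ∀ x, ⨆ n, g n x = e x := by
      intro x
      refine le_antisymm (iSup_le fun n => hgle n x) ?_
      obtain ⟨m, hm⟩ : ∃ m, x ∈ spanningSets μ m := by
        have h1 : x ∈ ⋃ n, spanningSets μ n := by
          rw [iUnion_spanningSets]; trivial
        exact Set.mem_iUnion.mp h1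
      have hxn : x ∈ spanningSets μ (max m ⌈f₀ x⌉₊) :=
        monotone_spanningSets μ (le_max_left _ _) hm
      have hle : e x ≤ ((max m ⌈f₀ x⌉₊ : ℕ) : ℝ≥0∞) := by
        rw [he_def]
        calc ENNReal.ofReal (f₀ x) ≤ ENNReal.ofReal ((max m ⌈f₀ x⌉₊ : ℕ) : ℝ) :=
              ENNReal.ofReal_le_ofReal (le_trans (Nat.le_ceil _)
                (by exact_mod_cast Nat.cast_le.mpr (le_max_right m _)))
          _ = ((max m ⌈f₀ x⌉₊ : ℕ) : ℝ≥0∞) := ENNReal.ofReal_natCast _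
      refine le_trans ?_ (le_iSup _ (max m ⌈f₀ x⌉₊))
      rw [hg_def]
      simp only [Set.indicator_of_mem hxn]
      exact le_min le_rfl hle
    have hgsm : ∀ n, Measurable fun x => g n x ^ s :=
      fun n => (ENNReal.continuous_rpow_const.measurable).comp (hgm n)
    have hIsup : I = ⨆ n, ∫⁻ x, g n x ^ s ∂μ := by
      rw [hI_def, ← lintegral_iSup hgsm
        (fun m n hmn x => ENNReal.rpow_le_rpow (hgmono hmn x) hs0.le)]
      apply lintegral_congr
      intro x
      rw [← hgsup x]
      exact ((ENNReal.monotone_rpow_of_nonneg hs0.le).map_iSup_of_continuousAt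
        (ENNReal.continuous_rpow_const.continuousAt)
        (by simp [ENNReal.zero_rpow_of_pos hs0])).symm ▸ rfl
    have hInle : ∀ n, (∫⁻ x, g n x ^ s ∂μ) ≤ (ENNReal.ofReal C) ^ r := by
      intro n
      set In := ∫⁻ x, g n x ^ s ∂μ with hIn_def
      have hIn_fin : In < ⊤ := by
        calc In ≤ ∫⁻ x, (spanningSets μ n).indicator
              (fun _ => ((n : ℝ≥0∞)) ^ s) x ∂μ := by
              apply lintegral_mono
              intro x
              by_cases hx : x ∈ spanningSets μ n
              · rw [hg_def]
                simp only [Set.indicator_of_mem hx]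
                exact ENNReal.rpow_le_rpow (min_le_right _ _) hs0.le
              · rw [hg_def]
                simp only [Set.indicator_of_notMem hx]
                rw [ENNReal.zero_rpow_of_pos hs0]
          _ = ((n : ℝ≥0∞)) ^ s * μ (spanningSets μ n) :=
              lintegral_indicator_const (measurableSet_spanningSets μ n) _
          _ < ⊤ := ENNReal.mul_lt_top
              (ENNReal.rpow_lt_top_of_nonneg hs0.le (ENNReal.natCast_ne_top n))
              (measure_spanningSets_lt_top μ n)
      set F : X → ℝ := fun x => ((g n x) ^ ((s-1)/q)).toReal with hF_def
      have hs1' : (0:ℝ) ≤ (s-1)/q := div_nonneg (by linarith) hq0.le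
      have hFnn : ∀ x, 0 ≤ F x := fun x => ENNReal.toReal_nonneg
      have hFe : ∀ x, (‖F x‖₊ : ℝ≥0∞) = g n x ^ ((s-1)/q) := by
        intro x
        rw [← enorm_eq_nnnorm, Real.enorm_eq_ofReal (hFnn x), hF_def, ENNReal.ofReal_toReal
          (ENNReal.rpow_lt_top_of_nonneg hs1' (hgfin n x)).ne]
      have hFq : ∀ x, (‖F x‖₊ : ℝ≥0∞) ^ q = g n x ^ (s-1) := by
        intro x
        rw [hFe, ← ENNReal.rpow_mul, div_mul_cancel₀ _ hq0.ne']
      have hFp : ∀ x, (‖F x‖₊ : ℝ≥0∞) ^ p = g n x ^ s := by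
        intro x
        rw [hFe, ← ENNReal.rpow_mul]
        congr 1
        have h5 : (s-1)/q * p = (s-1) * (p/q) := by ring
        rw [h5, ← ht_def, hst1]
      have hFm : Measurable F := ENNReal.measurable_toReal.comp
        ((ENNReal.continuous_rpow_const.measurable).comp (hgm n))
      have hFmem : MemLp F (ENNReal.ofReal p) μ := by
        refine ⟨hFm.aestronglyMeasurable, ?_⟩
        rw [hnorm p hp0]
        refine ENNReal.rpow_lt_top_of_nonneg (by positivity) ?_
        rw [lintegral_congr hFp]
        exact hIn_fin.ne
      obtain ⟨-, hineq⟩ := hC F hFmem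
      rw [hnorm q hq0, hnorm p hp0] at hineq
      have hL : In ≤ ∫⁻ x, (‖F (T x)‖₊ : ℝ≥0∞) ^ q ∂μ := by
        rw [cov (fun x => (‖F x‖₊ : ℝ≥0∞) ^ q)
          ((ENNReal.continuous_rpow_const.measurable).comp
            (hFm.nnnorm.coe_nnreal_ennreal))]
        refine lintegral_mono fun x => ?_
        dsimp only
        rw [hFq]
        calc g n x ^ s = g n x ^ ((1:ℝ) + (s-1)) := by norm_num
          _ = g n x ^ (1:ℝ) * g n x ^ (s-1) :=
              ENNReal.rpow_add_of_nonneg _ _ zero_le_one (by linarith)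
          _ = g n x * g n x ^ (s-1) := by rw [ENNReal.rpow_one]
          _ ≤ e x * g n x ^ (s-1) := mul_le_mul_left (hgle n x) _
      have h2 : In ^ (1/q) ≤ ENNReal.ofReal C * In ^ (1/p) := by
        calc In ^ (1/q) ≤ (∫⁻ x, (‖F (T x)‖₊ : ℝ≥0∞) ^ q ∂μ) ^ (1/q) :=
              ENNReal.rpow_le_rpow hL (by positivity)
          _ ≤ ENNReal.ofReal C * (∫⁻ x, (‖F x‖₊ : ℝ≥0∞) ^ p ∂μ) ^ (1/p) := hineq
          _ = ENNReal.ofReal C * In ^ (1/p) := by rw [lintegral_congr hFp]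
      by_cases hIn0 : In = 0
      · rw [hIn0]; exact zero_le
      · have h3 : In ^ (1/r) * In ^ (1/p) ≤ ENNReal.ofReal C * In ^ (1/p) := by
          have h4 : In ^ (1/q) = In ^ (1/r) * In ^ (1/p) := by
            rw [hqrp, ENNReal.rpow_add _ _ hIn0 hIn_fin.ne]
          rw [← h4]; exact h2
        have h5 : In ^ (1/r) ≤ ENNReal.ofReal C := by
          have hne0 : In ^ (1/p) ≠ 0 :=
            (ENNReal.rpow_pos (pos_iff_ne_zero.mpr hIn0) hIn_fin.ne).ne'
          have hnetop : In ^ (1/p) ≠ ⊤ :=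
            (ENNReal.rpow_lt_top_of_nonneg (by positivity) hIn_fin.ne).ne
          exact (ENNReal.mul_le_mul_iff_left hne0 hnetop).mp h3
        calc In = (In ^ (1/r)) ^ r := by
              rw [← ENNReal.rpow_mul, one_div, inv_mul_cancel₀ hr0.ne', ENNReal.rpow_one]
          _ ≤ (ENNReal.ofReal C) ^ r := ENNReal.rpow_le_rpow h5 hr0.le
    rw [hIsup]
    exact lt_of_le_of_lt (iSup_le hInle)
      (ENNReal.rpow_lt_top_of_nonneg hr0.le ENNReal.ofReal_ne_top)
  -- Part C1 : I < ⊤ → partition exists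
  have partC1 : I < ⊤ → ∃ F : ℕ → Set X, (∀ j, MeasurableSet (F j)) ∧
      Pairwise (Function.onFun Disjoint F) ∧ (⋃ j, F j) = Set.univ ∧
      ∑' j, QTess μ f₀ (F j) ^ s * μ (F j) < ⊤ := by
    intro hI
    set ι : ℕ ≃ ℤ := (Denumerable.eqv ℤ).symm with hι
    set G : ℤ → Set X := fun k => {x | (2:ℝ)^k ≤ f₀ x ∧ f₀ x < (2:ℝ)^(k+1)} with hG_def
    have hGm : ∀ k, MeasurableSet (G k) := by
      intro k
      have h : G k = f₀ ⁻¹' (Set.Ico ((2:ℝ)^k) ((2:ℝ)^(k+1))) := rfl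
      rw [h]
      exact hf₀m measurableSet_Ico
    set F : ℕ → Set X := fun j => Nat.casesOn j {x | f₀ x = 0} (fun i => G (ι i)) with hF_def
    have hFm : ∀ j, MeasurableSet (F j) := by
      intro j
      cases j with
      | zero => exact hf₀m (measurableSet_singleton 0)
      | succ i => exact hGm _
    have hGd' : ∀ k k' : ℤ, k < k' → Disjoint (G k) (G k') := by
      intro k k' hlt
      rw [Set.disjoint_left]
      intro x hx hx'
      have h1 : (2:ℝ)^(k+1) ≤ (2:ℝ)^k' := zpow_le_zpow_right₀ one_le_two (by omega)
      have h2 := hx.2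
      have h3 := hx'.1
      linarith
    have hGd : Pairwise (Function.onFun Disjoint G) := by
      intro k k' hkk'
      rcases lt_or_gt_of_ne hkk' with h | h
      · exact hGd' _ _ h
      · exact (hGd' _ _ h).symm
    have hFd : Pairwise (Function.onFun Disjoint F) := by
      have hd0 : ∀ i, Disjoint {x | f₀ x = 0} (G (ι i)) := by
        intro i
        rw [Set.disjoint_left]
        intro x hx hx'
        have h1 : (0:ℝ) < (2:ℝ)^(ι i) := zpow_pos two_pos _
        have h2 : f₀ x = 0 := hx
        have h3 := hx'.1
        linarith
      intro j j' hjj'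
      match j, j' with
      | 0, 0 => exact absurd rfl hjj'
      | 0, Nat.succ i => exact hd0 i
      | Nat.succ i, 0 => exact (hd0 i).symm
      | Nat.succ i, Nat.succ i' =>
        exact hGd (ι.injective.ne (by omega))
    have hFu : (⋃ j, F j) = Set.univ := by
      ext x
      simp only [Set.mem_iUnion, Set.mem_univ, iff_true]
      rcases eq_or_lt_of_le (hf₀nn x) with h0 | h0
      · exact ⟨0, h0.symm⟩
      · refine ⟨ι.symm ⌊Real.logb 2 (f₀ x)⌋ + 1, ?_⟩
        show x ∈ G (ι (ι.symm ⌊Real.logb 2 (f₀ x)⌋))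
        rw [Equiv.apply_symm_apply]
        constructor
        · calc (2:ℝ)^(⌊Real.logb 2 (f₀ x)⌋) = (2:ℝ) ^ ((⌊Real.logb 2 (f₀ x)⌋ : ℝ)) :=
              (Real.rpow_intCast 2 _).symm
            _ ≤ (2:ℝ) ^ (Real.logb 2 (f₀ x)) :=
              Real.rpow_le_rpow_of_exponent_le one_le_two (Int.floor_le _)
            _ = f₀ x := Real.rpow_logb two_pos (by norm_num) h0
        · calc f₀ x = (2:ℝ) ^ (Real.logb 2 (f₀ x)) :=
              (Real.rpow_logb two_pos (by norm_num) h0).symm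
            _ < (2:ℝ) ^ (((⌊Real.logb 2 (f₀ x)⌋ + 1 : ℤ) : ℝ)) :=
              Real.rpow_lt_rpow_of_exponent_lt one_lt_two
                (by push_cast; exact Int.lt_floor_add_one _)
            _ = (2:ℝ)^(⌊Real.logb 2 (f₀ x)⌋ + 1) := Real.rpow_intCast 2 _
    refine ⟨F, hFm, hFd, hFu, ?_⟩
    have hterm : ∀ j, QTess μ f₀ (F j) ^ s * μ (F j) ≤
        (Nat.casesOn j 0 (fun i => (2:ℝ≥0∞)^s * ∫⁻ x in G (ι i), e x ^ s ∂μ) : ℝ≥0∞) := by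
      intro j
      cases j with
      | zero =>
        have hQ : QTess μ f₀ (F 0) = 0 := by
          refine le_antisymm ?_ (zero_le)
          refine essSup_le_of_ae_le 0 ?_
          refine ae_restrict_of_forall_mem (hFm 0) ?_
          intro x hx
          have h : f₀ x = 0 := hx
          simp [h]
        rw [hQ, ENNReal.zero_rpow_of_pos hs0, zero_mul]
        exact zero_le
      | succ i =>
        set a : ℝ≥0∞ := ENNReal.ofReal ((2:ℝ)^(ι i)) with ha_def
        have h2k : (2:ℝ)^(ι i + 1) = 2 * (2:ℝ)^(ι i) := by
          rw [zpow_add_one₀ two_ne_zero]; ring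
        have hQ : QTess μ f₀ (F (i+1)) ≤ 2 * a := by
          refine essSup_le_of_ae_le _ ?_
          refine ae_restrict_of_forall_mem (hFm (i+1)) ?_
          intro x hx
          have hx2 : f₀ x < (2:ℝ)^(ι i + 1) := hx.2
          calc ENNReal.ofReal (f₀ x) ≤ ENNReal.ofReal (2 * (2:ℝ)^(ι i)) := by
                apply ENNReal.ofReal_le_ofReal
                rw [← h2k]
                exact hx2.le
            _ = 2 * a := by
                rw [ENNReal.ofReal_mul (by norm_num : (0:ℝ) ≤ 2), ha_def,
                  ENNReal.ofReal_ofNat]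
        have hlow : a ^ s * μ (F (i+1)) ≤ ∫⁻ x in G (ι i), e x ^ s ∂μ := by
          calc a ^ s * μ (F (i+1)) = ∫⁻ _x in G (ι i), a ^ s ∂μ :=
              (setLIntegral_const _ _).symm
            _ ≤ ∫⁻ x in G (ι i), e x ^ s ∂μ := by
                refine lintegral_mono_ae ?_
                refine ae_restrict_of_forall_mem (hGm (ι i)) ?_
                intro x hx
                refine ENNReal.rpow_le_rpow ?_ hs0.le
                rw [ha_def, he_def]
                exact ENNReal.ofReal_le_ofReal hx.1
        calc QTess μ f₀ (F (i+1)) ^ s * μ (F (i+1)) ≤ (2*a)^s * μ (F (i+1)) :=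
              mul_le_mul_left (ENNReal.rpow_le_rpow hQ hs0.le) _
          _ = (2:ℝ≥0∞)^s * (a^s * μ (F (i+1))) := by
              rw [ENNReal.mul_rpow_of_nonneg _ _ hs0.le, mul_assoc]
          _ ≤ (2:ℝ≥0∞)^s * ∫⁻ x in G (ι i), e x ^ s ∂μ := mul_le_mul_right hlow _
    calc ∑' j, QTess μ f₀ (F j) ^ s * μ (F j)
        ≤ ∑' j : ℕ, (Nat.casesOn j 0
            (fun i => (2:ℝ≥0∞)^s * ∫⁻ x in G (ι i), e x ^ s ∂μ) : ℝ≥0∞) :=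
          ENNReal.tsum_le_tsum hterm
      _ = (2:ℝ≥0∞)^s * ∑' i : ℕ, ∫⁻ x in G (ι i), e x ^ s ∂μ := by
          rw [tsum_eq_zero_add' ENNReal.summable, ENNReal.tsum_mul_left]
          exact zero_add _
      _ = (2:ℝ≥0∞)^s * ∑' k : ℤ, ∫⁻ x in G k, e x ^ s ∂μ := by
          congr 1
          exact Equiv.tsum_eq ι (fun k => ∫⁻ x in G k, e x ^ s ∂μ)
      _ = (2:ℝ≥0∞)^s * ∫⁻ x in ⋃ k, G k, e x ^ s ∂μ := by
          congr 1
          exact (lintegral_iUnion hGm hGd _).symm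
      _ ≤ (2:ℝ≥0∞)^s * I := by
          refine mul_le_mul_right ?_ _
          rw [hI_def]
          exact lintegral_mono' Measure.restrict_le_self le_rfl
      _ < ⊤ := ENNReal.mul_lt_top
          (ENNReal.rpow_lt_top_of_nonneg hs0.le (by norm_num)) hI
  -- Part C2 : partition exists → I < ⊤
  have partC2 : (∃ F : ℕ → Set X, (∀ j, MeasurableSet (F j)) ∧
      Pairwise (Function.onFun Disjoint F) ∧ (⋃ j, F j) = Set.univ ∧
      ∑' j, QTess μ f₀ (F j) ^ s * μ (F j) < ⊤) → I < ⊤ := by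
    rintro ⟨F, hFm, hFd, hFu, hFs⟩
    have h1 : I = ∑' j, ∫⁻ x in F j, e x ^ s ∂μ := by
      rw [hI_def, ← lintegral_iUnion hFm hFd, hFu, Measure.restrict_univ]
    have h2 : ∀ j, ∫⁻ x in F j, e x ^ s ∂μ ≤ QTess μ f₀ (F j) ^ s * μ (F j) := by
      intro j
      calc ∫⁻ x in F j, e x ^ s ∂μ ≤ ∫⁻ _x in F j, QTess μ f₀ (F j) ^ s ∂μ := by
            refine lintegral_mono_ae ?_
            have hae : ∀ᵐ x ∂(μ.restrict (F j)), e x ≤ QTess μ f₀ (F j) :=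
              ENNReal.ae_le_essSup e
            filter_upwards [hae] with x hx
            exact ENNReal.rpow_le_rpow hx hs0.le
        _ = QTess μ f₀ (F j) ^ s * μ (F j) := setLIntegral_const _ _
    rw [h1]
    exact lt_of_le_of_lt (ENNReal.tsum_le_tsum h2) hFs
  exact ⟨⟨fun h => hmem_iff.mpr (partB h), fun h => partA (hmem_iff.mp h)⟩,
    ⟨fun h => partC1 (hmem_iff.mp h), fun h => hmem_iff.mpr (partC2 h)⟩⟩
end
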